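/- arXiv:math/0701730 — 6 statements merged into one kernel-verified Lean document; each statement's English description precedes it below -/
import Mathlib

section
/- Let (R, 𝔪) be a commutative Noetherian local ring, M a finitely generated R-module, s a positive integer, and y_1, …, y_s elements of 𝔪 such that (y_1,…,y_s)^n M = ⋂_{(α_1,…,α_s) ∈ Λ_{s,n}} (y_1^{α_1},…,y_s^{α_s})M for all n ≥ 1. Then y_{i+1}^k M ∩ (y_1,…,y_i)^m M ⊆ (y_1,…,y_i,y_{i+1})^{k+m} M for all k, m ≥ 1 and all i < s. -/
open IsLocalRing

/-- The Krull dimension of a module, `dim M = dim R/ann M`. -/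
noncomputable def moduleDim (R : Type*) [CommRing R] (M : Type*) [AddCommGroup M]
    [Module R M] : WithBot ℕ∞ :=
  ringKrullDim (R ⧸ Module.annihilator R M)

/-- The length of a module, as the Krull dimension of its lattice of submodules. -/
noncomputable def moduleLength (R : Type*) [CommRing R] (M : Type*) [AddCommGroup M]
    [Module R M] : WithBot ℕ∞ :=
  Order.krullDim (Submodule R M)

/-- The depth of a module over a local ring: the supremum of lengths of `M`-regular
sequences consisting of elements of the maximal ideal. -/
noncomputable def moduleDepth (R : Type*) [CommRing R] [IsLocalRing R] (M : Type*)
    [AddCommGroup M] [Module R M] : ℕ∞ :=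
  sSup {n : ℕ∞ | ∃ rs : List R, (rs.length : ℕ∞) = n ∧ (∀ r ∈ rs, r ∈ maximalIdeal R) ∧
    RingTheory.Sequence.IsRegular M rs}

/-- A module over a Noetherian local ring is Cohen-Macaulay if its depth equals its
Krull dimension. -/
def IsCM (R : Type*) [CommRing R] [IsLocalRing R] (M : Type*) [AddCommGroup M]
    [Module R M] : Prop :=
  (moduleDepth R M : WithBot ℕ∞) = moduleDim R M

/-- The zeroth local cohomology `H^0_𝔪(M)`: the submodule of elements annihilated by
some power of the maximal ideal. -/
noncomputable def H0m (R : Type*) [CommRing R] [IsLocalRing R] (M : Type*) [AddCommGroup M]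
    [Module R M] : Submodule R M :=
  ⨆ n : ℕ, Submodule.torsionBySet R M ((maximalIdeal R ^ n : Ideal R) : Set R)

/-- `x : Fin d → R` is a system of parameters of `M` (where `d = dim M`):
all `x i` lie in the maximal ideal and `M/(x₁,…,x_d)M` has finite length. -/
def IsSOP (R : Type*) [CommRing R] [IsLocalRing R] (M : Type*) [AddCommGroup M] [Module R M]
    {d : ℕ} (x : Fin d → R) : Prop :=
  (∀ i, x i ∈ maximalIdeal R) ∧
    IsFiniteLength R (M ⧸ (Ideal.span (Set.range x) • (⊤ : Submodule R M)))

/-- `Λ_{s,n}`: tuples of positive integers of size `s` summing to `s + n - 1`. -/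
def Lambda (s n : ℕ) : Set (Fin s → ℕ) :=
  {α | (∀ i, 1 ≤ α i) ∧ (∑ i, α i) = s + n - 1}

/-- The sequence `x` has the property of parametric decomposition:
`q^n M = ⋂_{α ∈ Λ_{d,n}} (x₁^{α₁},…,x_d^{α_d})M` for all `n ≥ 1`, where `q = (x₁,…,x_d)`. -/
def HasParamDecomp (R : Type*) [CommRing R] (M : Type*) [AddCommGroup M] [Module R M]
    {d : ℕ} (x : Fin d → R) : Prop :=
  ∀ n : ℕ, 1 ≤ n →
    (Ideal.span (Set.range x)) ^ n • (⊤ : Submodule R M) =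
      ⨅ α ∈ Lambda d n, Ideal.span (Set.range fun i => x i ^ α i) • (⊤ : Submodule R M)

/-- `D : Fin (t+1) → Submodule R M` is the dimension filtration of `M`:
`D 0 = H^0_𝔪(M)`, `D t = M`, and each `D i` is the largest submodule of `D (i+1)` of
strictly smaller dimension. -/
def IsDimFiltration (R : Type*) [CommRing R] [IsLocalRing R] (M : Type*) [AddCommGroup M]
    [Module R M] {t : ℕ} (D : Fin (t + 1) → Submodule R M) : Prop :=
  D 0 = H0m R M ∧ D (Fin.last t) = ⊤ ∧
    ∀ i : Fin t,
      D i.castSucc ≤ D i.succ ∧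
      moduleDim R ↥(D i.castSucc) < moduleDim R ↥(D i.succ) ∧
      ∀ N : Submodule R M, N ≤ D i.succ →
        moduleDim R ↥N < moduleDim R ↥(D i.succ) → N ≤ D i.castSucc

/-- Given the dimension filtration `D` with `d_i = ds i`, a system of parameters
`x₁,…,x_d` is good if `D_i ∩ (x_{d_i+1},…,x_d)M = 0` for all `i < t`. -/
def IsGoodSOP (R : Type*) [CommRing R] [IsLocalRing R] (M : Type*) [AddCommGroup M]
    [Module R M] {d t : ℕ} (D : Fin (t + 1) → Submodule R M) (ds : Fin (t + 1) → ℕ)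
    (x : Fin d → R) : Prop :=
  IsSOP R M x ∧
    ∀ i : Fin (t + 1), (i : ℕ) < t →
      D i ⊓ (Ideal.span {r : R | ∃ j : Fin d, ds i ≤ (j : ℕ) ∧ r = x j}) •
        (⊤ : Submodule R M) = ⊥


section ParamDecompAux

lemma pd_tight2 {R : Type*} [CommRing R] (I J : Ideal R) : ∀ (c a b : ℕ), a + b = c →
    (I ⊔ J) ^ (a + b + 1) ≤ I ^ (a + 1) ⊔ J ^ (b + 1) := by
  intro c
  induction c with
  | zero =>
    intro a b h
    obtain ⟨rfl, rfl⟩ : a = 0 ∧ b = 0 := by omega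
    simp
  | succ c ih =>
    intro a b h
    have hmul : (I ⊔ J) ^ (a + b + 1) = I * (I ⊔ J) ^ (a + b) ⊔ J * (I ⊔ J) ^ (a + b) := by
      rw [pow_succ, mul_comm, Ideal.sup_mul]
    rw [hmul]
    apply sup_le
    · rcases Nat.eq_zero_or_pos a with rfl | ha
      · exact le_sup_of_le_left (by simpa using Ideal.mul_le_left)
      · obtain ⟨a', rfl⟩ : ∃ a', a = a' + 1 := ⟨a - 1, by omega⟩
        have h1 : (I ⊔ J) ^ (a' + 1 + b) ≤ I ^ (a' + 1) ⊔ J ^ (b + 1) := by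
          have := ih a' b (by omega)
          have e : a' + 1 + b = a' + b + 1 := by omega
          rw [e]; exact this
        calc I * (I ⊔ J) ^ (a' + 1 + b) ≤ I * (I ^ (a' + 1) ⊔ J ^ (b + 1)) :=
              Ideal.mul_mono_right h1
          _ = I * I ^ (a' + 1) ⊔ I * J ^ (b + 1) := Ideal.mul_sup _ _ _
          _ ≤ I ^ (a' + 1 + 1) ⊔ J ^ (b + 1) := by
              apply sup_le_sup
              · rw [← pow_succ']
              · exact Ideal.mul_le_right
    · rcases Nat.eq_zero_or_pos b with rfl | hb
      · exact le_sup_of_le_right (by simpa using Ideal.mul_le_left)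
      · obtain ⟨b', rfl⟩ : ∃ b', b = b' + 1 := ⟨b - 1, by omega⟩
        have h1 : (I ⊔ J) ^ (a + (b' + 1)) ≤ I ^ (a + 1) ⊔ J ^ (b' + 1) := by
          have := ih a b' (by omega)
          have e : a + (b' + 1) = a + b' + 1 := by omega
          rw [e]; exact this
        calc J * (I ⊔ J) ^ (a + (b' + 1)) ≤ J * (I ^ (a + 1) ⊔ J ^ (b' + 1)) :=
              Ideal.mul_mono_right h1
          _ = J * I ^ (a + 1) ⊔ J * J ^ (b' + 1) := Ideal.mul_sup _ _ _
          _ ≤ I ^ (a + 1) ⊔ J ^ (b' + 1 + 1) := by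
              apply sup_le_sup
              · exact Ideal.mul_le_right
              · rw [← pow_succ']

lemma pd_tight2' {R : Type*} [CommRing R] (I J : Ideal R) (a b : ℕ) :
    (I ⊔ J) ^ (a + b + 1) ≤ I ^ (a + 1) ⊔ J ^ (b + 1) :=
  pd_tight2 I J (a + b) a b rfl

lemma pd_pigeonF {R : Type*} [CommRing R] {ι : Type*} [DecidableEq ι] (t : Finset ι)
    (I : ι → Ideal R) (γ : ι → ℕ) :
    (⨆ j ∈ t, I j) ^ ((∑ j ∈ t, γ j) + 1) ≤ ⨆ j ∈ t, I j ^ (γ j + 1) := by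
  induction t using Finset.induction_on with
  | empty => simp
  | @insert a t' ha ih =>
    rw [Finset.iSup_insert, Finset.sum_insert ha, Finset.iSup_insert]
    calc (I a ⊔ ⨆ j ∈ t', I j) ^ (γ a + ∑ j ∈ t', γ j + 1)
        ≤ I a ^ (γ a + 1) ⊔ (⨆ j ∈ t', I j) ^ ((∑ j ∈ t', γ j) + 1) := pd_tight2' _ _ _ _
      _ ≤ _ := sup_le_sup_left ih _

lemma pd_span_image_finset {R : Type*} [CommRing R] {ι : Type*} (t : Finset ι) (f : ι → R) :
    Ideal.span (f '' ↑t) = ⨆ j ∈ t, Ideal.span {f j} := by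
  rw [Set.image_eq_iUnion, ← Ideal.submodule_span_eq, Submodule.span_iUnion₂]
  simp only [Ideal.submodule_span_eq, Finset.mem_coe]

lemma pd_card_filter_lt_fin {s r : ℕ} (hrs : r ≤ s) :
    (Finset.univ.filter (fun j : Fin s => (j : ℕ) < r)).card = r := by
  rw [Finset.card_filter]
  rw [Fin.sum_univ_eq_sum_range (fun j => if j < r then 1 else 0)]
  rw [← Finset.card_filter]
  rw [show Finset.filter (fun i => i < r) (Finset.range s) = Finset.range r by
    ext i; simp; omega]
  exact Finset.card_range r

set_option maxHeartbeats 1000000 in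
lemma pd_krullInt {R : Type u} [CommRing R] [IsLocalRing R] [IsNoetherianRing R]
    {M : Type v} [AddCommGroup M] [Module R M] [Module.Finite R M]
    (N : Submodule R M) (z : M)
    (h : ∀ t : ℕ, z ∈ N ⊔ (maximalIdeal R) ^ t • (⊤ : Submodule R M)) : z ∈ N := by
  classical
  let e : ULift.{v} R ≃+* R := ULift.ringEquiv
  haveI : IsLocalRing (ULift.{v} R) := e.symm.isLocalRing
  haveI : IsNoetherianRing (ULift.{v} R) := isNoetherianRing_of_ringEquiv R e.symm
  let N' : Submodule (ULift.{v} R) (ULift.{u} M) :=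
    { carrier := {m | m.down ∈ N}
      add_mem' := fun ha hb => N.add_mem ha hb
      zero_mem' := N.zero_mem
      smul_mem' := fun r m hm => N.smul_mem r.down hm }
  have key : ∀ (I : Ideal R) (I' : Ideal (ULift.{v} R)),
      (∀ r : R, r ∈ I → (ULift.up r : ULift.{v} R) ∈ I') → ∀ b : M, b ∈ I • (⊤ : Submodule R M) →
      (ULift.up b : ULift.{u} M) ∈ I' • (⊤ : Submodule (ULift.{v} R) (ULift.{u} M)) := by
    intro I I' hII' b hb
    refine Submodule.smul_induction_on hb (fun r hr n _ => ?_) (fun x y hx hy => ?_)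
    · exact Submodule.smul_mem_smul (hII' r hr) Submodule.mem_top
    · exact Submodule.add_mem _ hx hy
  haveI : Module.Finite (ULift.{v} R) (ULift.{u} M) := by
    obtain ⟨S, hS⟩ := Module.Finite.fg_top (R := R) (M := M)
    refine ⟨⟨S.image ULift.up, ?_⟩⟩
    rw [eq_top_iff]
    rintro ⟨m⟩ -
    have hm : m ∈ Submodule.span R ↑S := hS ▸ Submodule.mem_top
    refine Submodule.span_induction (p := fun m _ =>
        (ULift.up m : ULift.{u} M) ∈ Submodule.span (ULift.{v} R) ↑(S.image ULift.up)) ?_ ?_ ?_ ?_ hm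
    · intro x hx
      refine Submodule.subset_span ?_
      simp only [Finset.coe_image, Set.mem_image, Finset.mem_coe]
      exact ⟨x, hx, rfl⟩
    · exact Submodule.zero_mem _
    · intro x y _ _ hx hy; exact Submodule.add_mem _ hx hy
    · intro r x _ hx
      exact Submodule.smul_mem _ (ULift.up r) hx
  have hmax : ∀ t : ℕ, ∀ r : R, r ∈ (maximalIdeal R) ^ t →
      (ULift.up r : ULift.{v} R) ∈ (maximalIdeal (ULift.{v} R)) ^ t := by
    intro t r hr
    have h1 : Ideal.map (e.symm : R →+* ULift.{v} R) (maximalIdeal R)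
        ≤ maximalIdeal (ULift.{v} R) := by
      rw [Ideal.map_le_iff_le_comap]
      intro x hx
      rw [Ideal.mem_comap, IsLocalRing.mem_maximalIdeal, mem_nonunits_iff]
      intro hu
      exact (IsLocalRing.mem_maximalIdeal x).mp hx (by simpa using hu.map e)
    have h2 : (ULift.up r : ULift.{v} R) ∈ Ideal.map (e.symm : R →+* ULift.{v} R)
        ((maximalIdeal R) ^ t) := Ideal.mem_map_of_mem _ hr
    rw [Ideal.map_pow] at h2
    exact Ideal.pow_right_mono h1 t h2
  have h' : ∀ t : ℕ, (ULift.up z : ULift.{u} M) ∈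
      N' ⊔ (maximalIdeal (ULift.{v} R)) ^ t • (⊤ : Submodule (ULift.{v} R) (ULift.{u} M)) := by
    intro t
    obtain ⟨a, ha, b, hb, hab⟩ := Submodule.mem_sup.mp (h t)
    have hz : (ULift.up z : ULift.{u} M) = ULift.up a + ULift.up b := by
      rw [← hab]; rfl
    rw [hz]
    exact Submodule.add_mem _ (Submodule.mem_sup_left (by exact ha : (ULift.up a) ∈ N'))
      (Submodule.mem_sup_right (key _ _ (hmax t) b hb))
  have hbot : (⨅ t : ℕ, (maximalIdeal (ULift.{v} R)) ^ t •
      ⊤ : Submodule (ULift.{v} R) (ULift.{u} M ⧸ N')) = ⊥ :=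
    Ideal.iInf_pow_smul_eq_bot_of_isLocalRing (maximalIdeal (ULift.{v} R))
      (Ideal.IsMaximal.ne_top (maximalIdeal.isMaximal _))
  have hz : N'.mkQ (ULift.up z) ∈ (⨅ t : ℕ, (maximalIdeal (ULift.{v} R)) ^ t •
      ⊤ : Submodule (ULift.{v} R) (ULift.{u} M ⧸ N')) := by
    rw [Submodule.mem_iInf]
    intro t
    obtain ⟨a, ha, b, hb, hab⟩ := Submodule.mem_sup.mp (h' t)
    have heq : N'.mkQ (ULift.up z) = N'.mkQ b := by
      rw [← hab]; simp [Submodule.mkQ_apply, Submodule.Quotient.mk_add,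
        (Submodule.Quotient.mk_eq_zero N').mpr ha]
    rw [heq]
    have hmem : N'.mkQ b ∈ Submodule.map N'.mkQ ((maximalIdeal (ULift.{v} R)) ^ t • ⊤) :=
      Submodule.mem_map_of_mem hb
    rwa [Submodule.map_smul'', Submodule.map_top, Submodule.range_mkQ] at hmem
  rw [hbot] at hz
  have : (ULift.up z : ULift.{u} M) ∈ N' := by
    rwa [← N'.ker_mkQ, LinearMap.mem_ker]
  exact this

section ParamDecompMain

variable {R : Type*} [CommRing R] [IsLocalRing R] [IsNoetherianRing R]
  {M : Type*} [AddCommGroup M] [Module R M] [Module.Finite R M]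

/-- The coe of the filter finset is the set-builder set. -/
lemma pd_coe_filter {s r : ℕ} :
    ↑(Finset.univ.filter (fun j : Fin s => (j : ℕ) < r)) = {j : Fin s | (j : ℕ) < r} := by
  ext j; simp

/-- Pigeonhole: `(y₁,…,y_r)^n ⊆ (y₁^{β₁},…,y_r^{β_r})` when `∑ β_j ≤ r + n - 1`. -/
lemma pd_pigeon {s : ℕ} (y : Fin s → R) {r n : ℕ} (hrs : r ≤ s) (hn : 1 ≤ n)
    (β : Fin s → ℕ) (hβ1 : ∀ j : Fin s, (j : ℕ) < r → 1 ≤ β j)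
    (hsum : (∑ j ∈ Finset.univ.filter (fun j : Fin s => (j : ℕ) < r), β j) ≤ r + n - 1) :
    (Ideal.span (y '' {j : Fin s | (j : ℕ) < r})) ^ n ≤
      Ideal.span ((fun j => y j ^ β j) '' {j : Fin s | (j : ℕ) < r}) := by
  classical
  set t := Finset.univ.filter (fun j : Fin s => (j : ℕ) < r) with ht
  have h1 : Ideal.span (y '' {j : Fin s | (j : ℕ) < r}) = ⨆ j ∈ t, Ideal.span {y j} := by
    rw [← pd_coe_filter (r := r), pd_span_image_finset]
  have h2 : Ideal.span ((fun j => y j ^ β j) '' {j : Fin s | (j : ℕ) < r}) =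
      ⨆ j ∈ t, Ideal.span {y j ^ β j} := by
    rw [← pd_coe_filter (r := r), pd_span_image_finset]
  rw [h1, h2]
  have hcard : t.card = r := pd_card_filter_lt_fin hrs
  have hsub : (∑ j ∈ t, (β j - 1)) + 1 ≤ n := by
    have : (∑ j ∈ t, (β j - 1)) = (∑ j ∈ t, β j) - t.card := by
      rw [Finset.sum_tsub_distrib]
      · simp
      · intro j hj; exact hβ1 j (by simpa [ht] using hj)
    omega
  calc (⨆ j ∈ t, Ideal.span {y j}) ^ n
      ≤ (⨆ j ∈ t, Ideal.span {y j}) ^ ((∑ j ∈ t, (β j - 1)) + 1) :=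
        Ideal.pow_le_pow_right hsub
    _ ≤ ⨆ j ∈ t, Ideal.span {y j} ^ (β j - 1 + 1) := pd_pigeonF t _ _
    _ ≤ ⨆ j ∈ t, Ideal.span {y j ^ β j} := by
        refine iSup₂_le fun j hj => ?_
        have : β j - 1 + 1 = β j := by
          have := hβ1 j (by simpa [ht] using hj); omega
        rw [this, Ideal.span_singleton_pow]
        exact le_iSup₂_of_le j hj le_rfl

lemma pd_master {s : ℕ} (y : Fin s → R) (hy : ∀ i, y i ∈ maximalIdeal R)
    (hdec : HasParamDecomp R M y) :
    ∀ (d r : ℕ), r + d = s → 1 ≤ r → ∀ n, 1 ≤ n → ∀ z : M,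
      (∀ β : Fin s → ℕ, (∀ j : Fin s, (j : ℕ) < r → 1 ≤ β j) →
        (∑ j ∈ Finset.univ.filter (fun j : Fin s => (j : ℕ) < r), β j) = r + n - 1 →
        z ∈ Ideal.span ((fun j => y j ^ β j) '' {j : Fin s | (j : ℕ) < r}) •
          (⊤ : Submodule R M)) →
      z ∈ (Ideal.span (y '' {j : Fin s | (j : ℕ) < r})) ^ n • (⊤ : Submodule R M) := by
  classical
  intro d
  induction d with
  | zero =>
    intro r hrd hr n hn z hz
    have hrs : r = s := by omega
    subst hrs
    have hset : {j : Fin r | (j : ℕ) < r} = Set.univ := by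
      ext j; simp [j.isLt]
    rw [hset, Set.image_univ, hdec n hn]
    simp only [Submodule.mem_iInf]
    intro α hα
    have := hz α (fun j _ => hα.1 j) (by
      rw [Finset.filter_true_of_mem (fun j _ => j.isLt)]
      exact hα.2)
    rwa [hset, Set.image_univ] at this
  | succ d ih =>
    intro r hrd hr n hn z hz
    have hrs : r < s := by omega
    set w := y ⟨r, hrs⟩ with hw
    -- Step A
    have stepA : ∀ t : ℕ, z ∈ (Ideal.span (y '' {j : Fin s | (j : ℕ) < r})) ^ n •
        (⊤ : Submodule R M) ⊔ (Ideal.span {w}) ^ t • (⊤ : Submodule R M) := by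
      intro t
      induction t with
      | zero => simp
      | succ t iht =>
        obtain ⟨a, ha, b, hb, hab⟩ := Submodule.mem_sup.mp iht
        -- b is in all the parametric pieces at level (r, n)
        have hbP : ∀ β : Fin s → ℕ, (∀ j : Fin s, (j : ℕ) < r → 1 ≤ β j) →
            (∑ j ∈ Finset.univ.filter (fun j : Fin s => (j : ℕ) < r), β j) = r + n - 1 →
            b ∈ Ideal.span ((fun j => y j ^ β j) '' {j : Fin s | (j : ℕ) < r}) •
              (⊤ : Submodule R M) := by
          intro β hβ1 hβsum
          have hzz := hz β hβ1 hβsum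
          have haa : a ∈ Ideal.span ((fun j => y j ^ β j) '' {j : Fin s | (j : ℕ) < r}) •
              (⊤ : Submodule R M) :=
            Submodule.smul_mono_left (pd_pigeon y (le_of_lt hrs) hn β hβ1 (le_of_eq hβsum)) ha
          have : b = z - a := by rw [← hab, add_sub_cancel_left]
          rw [this]
          exact Submodule.sub_mem _ hzz haa
        -- b is in w^t M
        have hbw : b ∈ Ideal.span {w ^ t} • (⊤ : Submodule R M) := by
          rwa [← Ideal.span_singleton_pow]
        -- apply the outer induction hypothesis at (r+1, n+t)
        have hbig : b ∈ (Ideal.span (y '' {j : Fin s | (j : ℕ) < r + 1})) ^ (n + t) •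
            (⊤ : Submodule R M) := by
          refine ih (r + 1) (by omega) (by omega) (n + t) (by omega) b ?_
          intro β hβ1 hβsum
          have hins : Finset.univ.filter (fun j : Fin s => (j : ℕ) < r + 1) =
              insert (⟨r, hrs⟩ : Fin s) (Finset.univ.filter (fun j : Fin s => (j : ℕ) < r)) := by
            ext j
            simp only [Finset.mem_filter, Finset.mem_univ, true_and, Finset.mem_insert,
              Fin.ext_iff]
            omega
          have hnotmem : (⟨r, hrs⟩ : Fin s) ∉
              Finset.univ.filter (fun j : Fin s => (j : ℕ) < r) := by simp
          have hsum' : β ⟨r, hrs⟩ +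
              (∑ j ∈ Finset.univ.filter (fun j : Fin s => (j : ℕ) < r), β j) = r + n + t := by
            have := hβsum
            rw [hins, Finset.sum_insert hnotmem] at this
            omega
          rcases le_or_gt (β ⟨r, hrs⟩) t with hcase | hcase
          · -- small exponent on w: use b ∈ w^t M
            have h1 : Ideal.span {w ^ t} ≤ Ideal.span {w ^ β ⟨r, hrs⟩} :=
              Ideal.span_singleton_le_span_singleton.mpr (pow_dvd_pow w hcase)
            have h2 : Ideal.span {w ^ β ⟨r, hrs⟩} ≤
                Ideal.span ((fun j => y j ^ β j) '' {j : Fin s | (j : ℕ) < r + 1}) := by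
              rw [Ideal.span_singleton_le_iff_mem]
              exact Ideal.subset_span ⟨⟨r, hrs⟩, by simp, rfl⟩
            exact Submodule.smul_mono_left (h1.trans h2) hbw
          · -- large exponent on w: use the level-(r, n) pieces
            have hle : (∑ j ∈ Finset.univ.filter (fun j : Fin s => (j : ℕ) < r), β j)
                ≤ r + n - 1 := by omega
            set c := (r + n - 1) -
              (∑ j ∈ Finset.univ.filter (fun j : Fin s => (j : ℕ) < r), β j) with hc
            have h0s : 0 < s := by omega
            set j0 : Fin s := ⟨0, h0s⟩ with hj0
            have hj0mem : j0 ∈ Finset.univ.filter (fun j : Fin s => (j : ℕ) < r) := by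
              simp [hj0]; omega
            set β' := Function.update β j0 (β j0 + c) with hβ'
            have hβ'ge : ∀ j : Fin s, β j ≤ β' j := by
              intro j
              rw [hβ']
              rcases eq_or_ne j j0 with rfl | hne
              · simp
              · simp [Function.update_of_ne hne]
            have hβ'1 : ∀ j : Fin s, (j : ℕ) < r → 1 ≤ β' j := by
              intro j hj
              exact le_trans (hβ1 j (by omega)) (hβ'ge j)
            have hc2 : c + (∑ j ∈ Finset.univ.filter (fun j : Fin s => (j : ℕ) < r), β j)
                = r + n - 1 := by
              rw [hc]; omega
            have hβ'sum : (∑ j ∈ Finset.univ.filter (fun j : Fin s => (j : ℕ) < r), β' j)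
                = r + n - 1 := by
              rw [hβ', Finset.sum_update_of_mem hj0mem, Finset.sdiff_singleton_eq_erase]
              rw [← Finset.sum_erase_add _ β hj0mem] at hc2
              omega
            have hmem := hbP β' hβ'1 hβ'sum
            refine Submodule.smul_mono_left ?_ hmem
            rw [Ideal.span_le]
            rintro x ⟨j, hj, rfl⟩
            simp only [SetLike.mem_coe]
            show y j ^ β' j ∈ _
            have hjr : (j : ℕ) < r := hj
            have hbase : y j ^ β j ∈
                Ideal.span ((fun j => y j ^ β j) '' {j : Fin s | (j : ℕ) < r + 1}) :=
              Ideal.subset_span ⟨j, by simp; omega, rfl⟩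
            have : y j ^ β' j = y j ^ β j * y j ^ (β' j - β j) := by
              rw [← pow_add]
              congr 1
              have := hβ'ge j; omega
            rw [this]
            exact Ideal.mul_mem_right _ _ hbase
        -- split the ideal of the first r+1 elements
        have hsplit : Ideal.span (y '' {j : Fin s | (j : ℕ) < r + 1}) =
            Ideal.span (y '' {j : Fin s | (j : ℕ) < r}) ⊔ Ideal.span {w} := by
          have : {j : Fin s | (j : ℕ) < r + 1} =
              insert (⟨r, hrs⟩ : Fin s) {j : Fin s | (j : ℕ) < r} := by
            ext j
            simp only [Set.mem_setOf_eq, Set.mem_insert_iff, Fin.ext_iff]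
            omega
          rw [this, Set.image_insert_eq, ← Ideal.submodule_span_eq, Submodule.span_insert,
            Ideal.submodule_span_eq, Ideal.submodule_span_eq]
          exact sup_comm _ _
        obtain ⟨n0, rfl⟩ : ∃ n0, n = n0 + 1 := ⟨n - 1, by omega⟩
        have htight : (Ideal.span (y '' {j : Fin s | (j : ℕ) < r}) ⊔ Ideal.span {w}) ^
            (n0 + 1 + t) ≤ (Ideal.span (y '' {j : Fin s | (j : ℕ) < r})) ^ (n0 + 1)
              ⊔ (Ideal.span {w}) ^ (t + 1) := by
          have := pd_tight2' (Ideal.span (y '' {j : Fin s | (j : ℕ) < r})) (Ideal.span {w}) n0 t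
          have e : n0 + t + 1 = n0 + 1 + t := by omega
          rwa [e] at this
        rw [hsplit] at hbig
        have hbfin : b ∈ ((Ideal.span (y '' {j : Fin s | (j : ℕ) < r})) ^ (n0 + 1)
            ⊔ (Ideal.span {w}) ^ (t + 1)) • (⊤ : Submodule R M) :=
          Submodule.smul_mono_left htight hbig
        rw [Submodule.sup_smul] at hbfin
        rw [← hab]
        exact Submodule.add_mem _ (Submodule.mem_sup_left ha) hbfin
    -- Step B: Krull intersection
    refine pd_krullInt _ z fun t => ?_
    have hle : (Ideal.span {w}) ^ t ≤ (maximalIdeal R) ^ t :=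
      Ideal.pow_right_mono (by rw [Ideal.span_le]; simpa using hy ⟨r, hrs⟩) t
    exact (sup_le_sup_left (Submodule.smul_mono_left hle :
      (Ideal.span {w}) ^ t • (⊤ : Submodule R M) ≤ _) _) (stepA t)

end ParamDecompMain
end ParamDecompAux


/-- **Lemma 3.2 (ii).** If `y₁,…,y_s` in `𝔪` has the property of parametric
decomposition, then `y_{i+1}^k M ∩ (y₁,…,y_i)^m M ⊆ (y₁,…,y_{i+1})^{k+m} M` for all
`k, m ≥ 1` and `i < s`. -/
theorem stmt_9 {R : Type*} [CommRing R] [IsLocalRing R] [IsNoetherianRing R]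
    {M : Type*} [AddCommGroup M] [Module R M] [Module.Finite R M]
    {s : ℕ} (hs : 1 ≤ s) (y : Fin s → R) (hy : ∀ i, y i ∈ maximalIdeal R)
    (hdec : HasParamDecomp R M y) :
    ∀ (i : ℕ) (hi : i < s) (k m : ℕ), 1 ≤ k → 1 ≤ m →
      (Ideal.span {y ⟨i, hi⟩ ^ k} • (⊤ : Submodule R M)) ⊓
          ((Ideal.span {r : R | ∃ j : Fin s, (j : ℕ) < i ∧ r = y j}) ^ m •
            (⊤ : Submodule R M)) ≤
        (Ideal.span {r : R | ∃ j : Fin s, (j : ℕ) < i + 1 ∧ r = y j}) ^ (k + m) •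
          (⊤ : Submodule R M) := by
  classical
  intro i hi k m hk hm z hz
  have hsetE : ∀ c : ℕ, {r : R | ∃ j : Fin s, (j : ℕ) < c ∧ r = y j}
      = y '' {j : Fin s | (j : ℕ) < c} := by
    intro c
    ext x
    exact ⟨fun ⟨j, hj, e⟩ => ⟨j, hj, e.symm⟩, fun ⟨j, hj, e⟩ => ⟨j, hj, e.symm⟩⟩
  obtain ⟨hz1, hz2⟩ := Submodule.mem_inf.mp hz
  rw [hsetE] at hz2
  rw [hsetE]
  have := pd_master y hy hdec (s - (i + 1)) (i + 1) (by omega) (by omega) (k + m) (by omega) z ?_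
  · exact this
  intro β hβ1 hβsum
  set wi : Fin s := ⟨i, hi⟩ with hwi
  have hins : Finset.univ.filter (fun j : Fin s => (j : ℕ) < i + 1) =
      insert wi (Finset.univ.filter (fun j : Fin s => (j : ℕ) < i)) := by
    ext j
    simp only [Finset.mem_filter, Finset.mem_univ, true_and, Finset.mem_insert, Fin.ext_iff,
      hwi]
    omega
  have hnotmem : wi ∉ Finset.univ.filter (fun j : Fin s => (j : ℕ) < i) := by simp [hwi]
  have hsum' : β wi + (∑ j ∈ Finset.univ.filter (fun j : Fin s => (j : ℕ) < i), β j)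
      = i + k + m := by
    rw [hins, Finset.sum_insert hnotmem] at hβsum
    omega
  rcases le_or_gt (β wi) k with hcase | hcase
  · have h1 : Ideal.span {y wi ^ k} ≤ Ideal.span {y wi ^ β wi} :=
      Ideal.span_singleton_le_span_singleton.mpr (pow_dvd_pow _ hcase)
    have h2 : Ideal.span {y wi ^ β wi} ≤
        Ideal.span ((fun j => y j ^ β j) '' {j : Fin s | (j : ℕ) < i + 1}) := by
      rw [Ideal.span_singleton_le_iff_mem]
      exact Ideal.subset_span ⟨wi, by simp [hwi], rfl⟩
    exact Submodule.smul_mono_left (h1.trans h2) hz1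
  · have hle : (∑ j ∈ Finset.univ.filter (fun j : Fin s => (j : ℕ) < i), β j) ≤ i + m - 1 := by
      omega
    have hpig := pd_pigeon y (le_of_lt hi) hm β (fun j hj => hβ1 j (by omega)) hle
    have himg : Ideal.span ((fun j => y j ^ β j) '' {j : Fin s | (j : ℕ) < i}) ≤
        Ideal.span ((fun j => y j ^ β j) '' {j : Fin s | (j : ℕ) < i + 1}) :=
      Ideal.span_mono (Set.image_mono fun j hj => by
        simp only [Set.mem_setOf_eq] at hj ⊢; omega)
    exact Submodule.smul_mono_left (hpig.trans himg) hz2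
end

section
/- Let (R, 𝔪) be a commutative Noetherian local ring, M a finitely generated R-module, s a positive integer, and y_1, …, y_s elements of 𝔪 such that (y_1,…,y_s)^n M = ⋂_{(α_1,…,α_s) ∈ Λ_{s,n}} (y_1^{α_1},…,y_s^{α_s})M for all n ≥ 1. Then y_{i+1}^k M ∩ (y_1,…,y_i)^m M ⊆ y_{i+1}^k (y_1,…,y_i,y_{i+1})M + (y_1,…,y_i)^{m+1} M for all k, m ≥ 1 and all 1 ≤ i < s. -/
open IsLocalRing

section AuxLemmas

variable {R : Type*} [CommRing R]

lemma aux_prod_pow_mem_pow {ι : Type*} (t : Finset ι) (I : Ideal R) (z : ι → R) (γ : ι → ℕ)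
    (h : ∀ j ∈ t, z j ∈ I) : (∏ j ∈ t, z j ^ γ j) ∈ I ^ (∑ j ∈ t, γ j) := by
  classical
  induction t using Finset.induction with
  | empty => simp [Ideal.one_eq_top]
  | insert a s hnotmem ih =>
    rw [Finset.prod_insert hnotmem, Finset.sum_insert hnotmem, pow_add]
    exact Ideal.mul_mem_mul (Ideal.pow_mem_pow (h a (Finset.mem_insert_self a s)) _)
      (ih fun j hj => h j (Finset.mem_insert_of_mem hj))

lemma aux_prod_update {ι : Type*} [Fintype ι] [DecidableEq ι] (z : ι → R) (γ : ι → ℕ) (j : ι) :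
    (∏ j', z j' ^ (Function.update γ j (γ j + 1)) j') = z j * ∏ j', z j' ^ γ j' := by
  rw [← Finset.mul_prod_erase Finset.univ _ (Finset.mem_univ j),
      ← Finset.mul_prod_erase Finset.univ (fun j' => z j' ^ γ j') (Finset.mem_univ j)]
  rw [Function.update_self, pow_succ, mul_comm (z j ^ γ j) (z j), mul_assoc]
  congr 1
  congr 1
  exact Finset.prod_congr rfl fun j' hj' => by
    rw [Function.update_of_ne (Finset.ne_of_mem_erase hj')]

lemma aux_span_pow_le {ι : Type*} [Fintype ι] (z : ι → R) (n : ℕ) (K : Ideal R)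
    (hK : ∀ γ : ι → ℕ, (∑ j, γ j) = n → (∏ j, z j ^ γ j) ∈ K) :
    Ideal.span (Set.range z) ^ n ≤ K := by
  classical
  induction n generalizing K with
  | zero =>
    have : (1 : R) ∈ K := by simpa using hK (fun _ => 0) (by simp)
    rw [pow_zero, Ideal.one_eq_top, (Ideal.eq_top_iff_one K).mpr this]
  | succ n ih =>
    rw [pow_succ]
    have hK' : Ideal.span (Set.range z) ^ n ≤ ⨅ j : ι, Submodule.colon K (Ideal.span {z j}) := by
      apply ih
      intro γ hγ
      rw [Submodule.mem_iInf]
      intro j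
      rw [Ideal.mem_colon_span_singleton]
      have := hK (Function.update γ j (γ j + 1)) (by
        rw [Finset.sum_update_of_mem (Finset.mem_univ j), Finset.sdiff_singleton_eq_erase]
        rw [← Finset.sum_erase_add Finset.univ γ (Finset.mem_univ j)] at hγ
        omega)
      rwa [aux_prod_update, mul_comm] at this
    refine le_trans (Ideal.mul_mono_left hK') (Ideal.mul_le.mpr fun r hr s hs => ?_)
    induction hs using Submodule.span_induction with
    | mem x hx =>
      obtain ⟨j, rfl⟩ := hx
      exact Ideal.mem_colon_span_singleton.mp ((Submodule.mem_iInf _).mp hr j)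
    | zero => simpa using K.zero_mem
    | add x y _ _ hx hy => rw [mul_add]; exact K.add_mem hx hy
    | smul c x _ hx => rw [mul_smul_comm]; exact K.smul_mem c hx

/-- Pigeonhole: `(z₁,…,z_r)^n ⊆ (z₁^{α₁},…,z_r^{α_r})` when `∑ α ≤ r + n - 1`. -/
lemma aux_pigeonhole {ι : Type*} [Fintype ι] (z : ι → R) (n : ℕ) (hn : 1 ≤ n) (α : ι → ℕ)
    (hα : ∀ j, 1 ≤ α j) (hsum : ∑ j, α j ≤ Fintype.card ι + n - 1) :
    Ideal.span (Set.range z) ^ n ≤ Ideal.span (Set.range fun j => z j ^ α j) := by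
  classical
  apply aux_span_pow_le
  intro γ hγ
  have hj : ∃ j, α j ≤ γ j := by
    by_contra hc
    push_neg at hc
    have h1 : ∑ j, (γ j + 1) ≤ ∑ j, α j := Finset.sum_le_sum fun j _ => hc j
    rw [Finset.sum_add_distrib, Finset.sum_const, Finset.card_univ, smul_eq_mul, mul_one, hγ]
      at h1
    omega
  obtain ⟨j, hj⟩ := hj
  rw [← Finset.mul_prod_erase Finset.univ _ (Finset.mem_univ j),
    show γ j = α j + (γ j - α j) by omega, pow_add, mul_assoc]
  exact Ideal.mul_mem_right _ _ (Ideal.subset_span ⟨j, rfl⟩)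

/-- Monomial splitting: degree-`N` monomials either have initial part of degree `≥ a`
or are divisible by `z_last^b` with cofactor of degree `≥ c`. -/
lemma aux_split {r : ℕ} (z : Fin (r + 1) → R) (N a b c : ℕ) (hab : a + b = N + 1)
    (hc : c ≤ N - b) (hbN : b ≤ N) :
    Ideal.span (Set.range z) ^ N ≤
      Ideal.span (Set.range (z ∘ Fin.castSucc)) ^ a ⊔
        Ideal.span {z (Fin.last r) ^ b} * Ideal.span (Set.range z) ^ c := by
  classical
  apply aux_span_pow_le
  intro γ hγ
  rw [Fin.sum_univ_castSucc] at hγ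
  rw [Fin.prod_univ_castSucc]
  by_cases hS : a ≤ ∑ j : Fin r, γ (Fin.castSucc j)
  · apply Submodule.mem_sup_left
    apply Ideal.mul_mem_right
    have h1 : (∏ j : Fin r, z (Fin.castSucc j) ^ γ (Fin.castSucc j)) ∈
        Ideal.span (Set.range (z ∘ Fin.castSucc)) ^ (∑ j : Fin r, γ (Fin.castSucc j)) :=
      aux_prod_pow_mem_pow _ _ _ _ fun j _ => Ideal.subset_span ⟨j, rfl⟩
    exact Ideal.pow_le_pow_right hS h1
  · push_neg at hS
    apply Submodule.mem_sup_right
    set t := γ (Fin.last r) with ht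
    have hbt : b ≤ t := by omega
    set γ' := Function.update γ (Fin.last r) (t - b) with hγ'
    have hprod : (∏ j : Fin (r + 1), z j ^ γ' j) =
        (∏ j : Fin r, z (Fin.castSucc j) ^ γ (Fin.castSucc j)) * z (Fin.last r) ^ (t - b) := by
      rw [Fin.prod_univ_castSucc]
      congr 1
      · exact Finset.prod_congr rfl fun j _ => by
          rw [hγ', Function.update_of_ne (Fin.castSucc_lt_last j).ne]
      · rw [hγ', Function.update_self]
    have hmem : (∏ j : Fin (r + 1), z j ^ γ' j) ∈ Ideal.span (Set.range z) ^ c := by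
      have h1 := aux_prod_pow_mem_pow Finset.univ (Ideal.span (Set.range z)) z γ'
        (fun j _ => Ideal.subset_span ⟨j, rfl⟩)
      have hsum' : ∑ j, γ' j = (∑ j : Fin r, γ (Fin.castSucc j)) + (t - b) := by
        rw [Fin.sum_univ_castSucc]
        congr 1
        · exact Finset.sum_congr rfl fun j _ => by
            rw [hγ', Function.update_of_ne (Fin.castSucc_lt_last j).ne]
        · rw [hγ', Function.update_self]
      rw [hsum'] at h1
      exact Ideal.pow_le_pow_right (by omega) h1
    have : (∏ j : Fin r, z (Fin.castSucc j) ^ γ (Fin.castSucc j)) * z (Fin.last r) ^ t =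
        z (Fin.last r) ^ b * (∏ j : Fin (r + 1), z j ^ γ' j) := by
      have hzt : z (Fin.last r) ^ t = z (Fin.last r) ^ b * z (Fin.last r) ^ (t - b) := by
        rw [← pow_add]; congr 1; omega
      rw [hprod, hzt]; ring
    rw [this]
    exact Ideal.mul_mem_mul (Ideal.subset_span rfl) hmem

/-- Extend a bound on initial exponents to a member of `Λ` dominating them. -/
lemma aux_cover {r : ℕ} (hr : 1 ≤ r) (z : Fin (r + 1) → R) (n : ℕ)
    (β : Fin (r + 1) → ℕ) (hβ1 : ∀ j, 1 ≤ β j)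
    (hβs : ∑ j : Fin r, β (Fin.castSucc j) ≤ r + n - 1) :
    ∃ α : Fin r → ℕ, α ∈ Lambda r n ∧
      Ideal.span (Set.range fun j : Fin r => (z ∘ Fin.castSucc) j ^ α j) ≤
        Ideal.span (Set.range fun j : Fin (r + 1) => z j ^ β j) := by
  classical
  set d := (r + n - 1) - ∑ j : Fin r, β (Fin.castSucc j) with hd
  set j₀ : Fin r := ⟨0, hr⟩ with hj₀
  refine ⟨fun j => β (Fin.castSucc j) + if j = j₀ then d else 0, ⟨⟨fun j => ?_, ?_⟩, ?_⟩⟩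
  · exact le_trans (hβ1 (Fin.castSucc j)) (Nat.le_add_right _ _)
  · rw [Finset.sum_add_distrib, Finset.sum_ite_eq' Finset.univ j₀ (fun _ => d)]
    simp only [Finset.mem_univ, if_true]
    show (∑ j : Fin r, β (Fin.castSucc j)) + d = r + n - 1
    omega
  · rw [Ideal.span_le]
    rintro x ⟨j, rfl⟩
    simp only [Function.comp_apply]
    rw [pow_add]
    exact Ideal.mul_mem_right _ _ (Ideal.subset_span ⟨Fin.castSucc j, rfl⟩)


/-- Krull intersection for a module in the same universe as the ring. -/
lemma aux_krull_free [IsLocalRing R] [IsNoetherianRing R] (n : ℕ)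
    (N : Submodule R (Fin n → R)) (a : Fin n → R)
    (h : ∀ p : ℕ, a ∈ N ⊔ (IsLocalRing.maximalIdeal R ^ p) • (⊤ : Submodule R (Fin n → R))) :
    a ∈ N := by
  have hmem : ∀ p : ℕ, N.mkQ a ∈
      (IsLocalRing.maximalIdeal R ^ p) • (⊤ : Submodule R ((Fin n → R) ⧸ N)) := by
    intro p
    obtain ⟨b, hb, c, hc, hbc⟩ := Submodule.mem_sup.mp (h p)
    have heq : N.mkQ a = N.mkQ c := by
      rw [← hbc]
      simp [(Submodule.Quotient.mk_eq_zero N).mpr hb, Submodule.Quotient.mk_add]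
    rw [heq]
    have := Submodule.mem_map_of_mem (f := N.mkQ) hc
    rwa [Submodule.map_smul'', Submodule.map_top, Submodule.range_mkQ] at this
  have hbot : (⨅ p : ℕ, (IsLocalRing.maximalIdeal R ^ p) •
      (⊤ : Submodule R ((Fin n → R) ⧸ N))) = ⊥ :=
    Ideal.iInf_pow_smul_eq_bot_of_isLocalRing (I := IsLocalRing.maximalIdeal R)
      (Ideal.IsMaximal.ne_top inferInstance)
  have : N.mkQ a = 0 := by
    rw [← Submodule.mem_bot (R := R), ← hbot]
    exact Submodule.mem_iInf _ |>.mpr hmem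
  exact (Submodule.Quotient.mk_eq_zero N).mp this

/-- Krull intersection: if `a ∈ N + 𝔪^p M` for all `p`, then `a ∈ N`. -/
lemma aux_krull {M : Type*} [IsLocalRing R] [IsNoetherianRing R] [AddCommGroup M] [Module R M]
    [Module.Finite R M] (N : Submodule R M) (a : M)
    (h : ∀ p : ℕ, a ∈ N ⊔ (IsLocalRing.maximalIdeal R ^ p) • (⊤ : Submodule R M)) : a ∈ N := by
  obtain ⟨n, e, he⟩ := Module.Finite.exists_fin' R M
  obtain ⟨a₀, rfl⟩ := he a
  suffices h0 : a₀ ∈ N.comap e by simpa using h0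
  apply aux_krull_free n (N.comap e) a₀
  intro p
  obtain ⟨b, hb, c, hc, hbc⟩ := Submodule.mem_sup.mp (h p)
  obtain ⟨b₀, rfl⟩ := he b
  obtain ⟨c₀, hc₀⟩ : ∃ c₀, c₀ ∈ (IsLocalRing.maximalIdeal R ^ p) •
      (⊤ : Submodule R (Fin n → R)) ∧ e c₀ = c := by
    have : c ∈ Submodule.map e ((IsLocalRing.maximalIdeal R ^ p) • ⊤) := by
      rwa [Submodule.map_smul'', Submodule.map_top, LinearMap.range_eq_top.mpr he]
    obtain ⟨c₀, hc₀, rfl⟩ := this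
    exact ⟨c₀, hc₀, rfl⟩
  have hker : a₀ - (b₀ + c₀) ∈ N.comap e := by
    simp only [Submodule.mem_comap, map_sub, map_add, hc₀.2, hbc]
    simpa using N.zero_mem
  have : a₀ = (a₀ - (b₀ + c₀) + b₀) + c₀ := by ring
  rw [this]
  exact Submodule.add_mem_sup (Submodule.add_mem _ hker (by simpa using hb)) hc₀.1

variable {M : Type*} [AddCommGroup M] [Module R M]

set_option maxHeartbeats 1000000 in
/-- Parametric decomposition descends to the initial truncation of the sequence. -/
lemma aux_descent [IsLocalRing R] [IsNoetherianRing R] [Module.Finite R M]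
    {r : ℕ} (hr : 1 ≤ r) (z : Fin (r + 1) → R)
    (hz : z (Fin.last r) ∈ IsLocalRing.maximalIdeal R)
    (hzall : ∀ j, z j ∈ IsLocalRing.maximalIdeal R)
    (hd : HasParamDecomp R M z) : HasParamDecomp R M (z ∘ Fin.castSucc) := by
  intro n hn
  set q : Ideal R := Ideal.span (Set.range z) with hq
  set q' : Ideal R := Ideal.span (Set.range (z ∘ Fin.castSucc)) with hq'
  set D : Submodule R M := ⨅ α ∈ Lambda r n,
    Ideal.span (Set.range fun i => (z ∘ Fin.castSucc) i ^ α i) • (⊤ : Submodule R M) with hD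
  -- `q' ≤ q`
  have hq'q : q' ≤ q := Ideal.span_mono (by rintro x ⟨j, rfl⟩; exact ⟨Fin.castSucc j, rfl⟩)
  -- pigeonhole : `q'^n • ⊤ ≤ D`
  have hpig : q' ^ n • (⊤ : Submodule R M) ≤ D := by
    apply le_iInf₂
    intro α hα
    have h2 := hα.2
    exact Submodule.smul_mono_left (aux_pigeonhole _ n hn α hα.1
      (by rw [Fintype.card_fin]; omega))
  refine le_antisymm hpig ?_
  -- the `B p` submodules
  set B : ℕ → Submodule R M := fun p =>
    (Ideal.span {z (Fin.last r) ^ p} * q ^ (n - 1)) • (⊤ : Submodule R M) with hB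
  -- coverage of `D ⊓ B p` (with `B 0`-case read as `D` alone)
  have hcover : ∀ p : ℕ, D ⊓ B p ≤ q ^ (n + p) • (⊤ : Submodule R M) := by
    intro p
    rw [hd (n + p) (by omega)]
    apply le_iInf₂
    intro β hβ
    obtain ⟨hβ1, hβ2⟩ := hβ
    rw [Fin.sum_univ_castSucc] at hβ2
    by_cases hcase : β (Fin.last r) ≤ p
    · refine le_trans inf_le_right (Submodule.smul_mono_left ?_)
      have h1 : Ideal.span {z (Fin.last r) ^ p} ≤
          Ideal.span (Set.range fun i => z i ^ β i) := by
        rw [Ideal.span_le, Set.singleton_subset_iff,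
          show p = β (Fin.last r) + (p - β (Fin.last r)) by omega, pow_add]
        exact Ideal.mul_mem_right _ _ (Ideal.subset_span ⟨Fin.last r, rfl⟩)
      exact le_trans Ideal.mul_le_left h1
    · refine le_trans inf_le_left ?_
      obtain ⟨α, hα, hle⟩ := aux_cover hr z n β hβ1 (by
        have := hβ1 (Fin.last r); omega)
      exact le_trans (iInf₂_le α hα) (Submodule.smul_mono_left hle)
  -- splitting : `q^(n+p) • ⊤ ≤ q'^n • ⊤ ⊔ B (p+1)`
  have hsplit : ∀ p : ℕ, q ^ (n + p) • (⊤ : Submodule R M) ≤ q' ^ n • ⊤ ⊔ B (p + 1) := by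
    intro p
    have h1 := aux_split z (n + p) n (p + 1) (n - 1) (by omega) (by omega) (by omega)
    refine le_trans (Submodule.smul_mono_left h1) ?_
    rw [Submodule.sup_smul]
  -- coverage of `D` itself
  have hcover0 : D ≤ q ^ n • (⊤ : Submodule R M) := by
    rw [hd n hn]
    apply le_iInf₂
    intro β hβ
    obtain ⟨hβ1, hβ2⟩ := hβ
    rw [Fin.sum_univ_castSucc] at hβ2
    obtain ⟨α, hα, hle⟩ := aux_cover hr z n β hβ1 (by
      have := hβ1 (Fin.last r); omega)
    exact le_trans (iInf₂_le α hα) (Submodule.smul_mono_left hle)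
  -- modular law step
  have hmod : ∀ p : ℕ, D ⊓ (q' ^ n • (⊤ : Submodule R M) ⊔ B p) =
      q' ^ n • (⊤ : Submodule R M) ⊔ (D ⊓ B p) := by
    intro p
    rw [inf_comm, sup_inf_assoc_of_le _ hpig, inf_comm]
  -- a ∈ D: starting point
  intro a ha
  -- main induction
  have key : ∀ p : ℕ, a ∈ q' ^ n • (⊤ : Submodule R M) ⊔ (D ⊓ B (p + 1)) := by
    intro p
    induction p with
    | zero =>
      rw [← hmod 1]
      exact ⟨ha, (le_trans hcover0 (hsplit 0)) ha⟩
    | succ p ih =>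
      have h2 : D ⊓ B (p + 1) ≤ q' ^ n • (⊤ : Submodule R M) ⊔ (D ⊓ B (p + 2)) := by
        rw [← hmod (p + 2)]
        exact le_inf inf_le_left (le_trans (hcover (p + 1)) (hsplit (p + 1)))
      rcases Submodule.mem_sup.mp ih with ⟨b, hb, c, hc, hbc⟩
      rcases Submodule.mem_sup.mp (h2 hc) with ⟨b', hb', c', hc', hbc'⟩
      rw [← hbc, ← hbc']
      have heq : b + (b' + c') = (b + b') + c' := (add_assoc b b' c').symm
      rw [heq]
      exact Submodule.add_mem_sup (Submodule.add_mem _ hb hb') hc'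
  -- conclude with Krull intersection
  apply aux_krull
  intro p
  have hBm : ∀ p : ℕ, B p ≤ (IsLocalRing.maximalIdeal R ^ p) • (⊤ : Submodule R M) := by
    intro p
    apply Submodule.smul_mono_left
    refine le_trans Ideal.mul_le_left ?_
    rw [Ideal.span_le, Set.singleton_subset_iff]
    exact Ideal.pow_mem_pow hz p
  have h6 : (IsLocalRing.maximalIdeal R ^ (p + 1)) • (⊤ : Submodule R M) ≤
      (IsLocalRing.maximalIdeal R ^ p) • (⊤ : Submodule R M) :=
    Submodule.smul_mono_left (Ideal.pow_le_pow_right (by omega))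
  exact (sup_le_sup_left (le_trans inf_le_right (le_trans (hBm (p + 1)) h6)) _) (key p)

/-- The key containment for the last element of a sequence with parametric decomposition. -/
lemma aux_last {r : ℕ} (z : Fin (r + 1) → R) (k m : ℕ) (hk : 1 ≤ k) (hm : 1 ≤ m)
    (hd : HasParamDecomp R M z) :
    Ideal.span {z (Fin.last r) ^ k} • (⊤ : Submodule R M) ⊓
        (Ideal.span (Set.range (z ∘ Fin.castSucc))) ^ m • (⊤ : Submodule R M) ≤
      Ideal.span {z (Fin.last r) ^ k} •
          (Ideal.span (Set.range z) • (⊤ : Submodule R M)) ⊔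
        (Ideal.span (Set.range (z ∘ Fin.castSucc))) ^ (m + 1) • (⊤ : Submodule R M) := by
  have hcov : Ideal.span {z (Fin.last r) ^ k} • (⊤ : Submodule R M) ⊓
      (Ideal.span (Set.range (z ∘ Fin.castSucc))) ^ m • (⊤ : Submodule R M) ≤
      Ideal.span (Set.range z) ^ (m + k) • (⊤ : Submodule R M) := by
    rw [hd (m + k) (by omega)]
    apply le_iInf₂
    intro β hβ
    obtain ⟨hβ1, hβ2⟩ := hβ
    rw [Fin.sum_univ_castSucc] at hβ2
    by_cases hcase : β (Fin.last r) ≤ k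
    · refine le_trans inf_le_left (Submodule.smul_mono_left ?_)
      rw [Ideal.span_le, Set.singleton_subset_iff,
        show k = β (Fin.last r) + (k - β (Fin.last r)) by omega, pow_add]
      exact Ideal.mul_mem_right _ _ (Ideal.subset_span ⟨Fin.last r, rfl⟩)
    · refine le_trans inf_le_right (Submodule.smul_mono_left ?_)
      have hp := aux_pigeonhole (z ∘ Fin.castSucc) m hm (fun j => β (Fin.castSucc j))
        (fun j => hβ1 _) (by
          rw [Fintype.card_fin]
          show (∑ j : Fin r, β (Fin.castSucc j)) ≤ r + m - 1
          omega)
      refine le_trans hp (Ideal.span_le.mpr ?_)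
      rintro x ⟨j, rfl⟩
      exact Ideal.subset_span ⟨Fin.castSucc j, rfl⟩
  refine le_trans hcov ?_
  have hsp := aux_split z (m + k) (m + 1) k 1 (by omega) (by omega) (by omega)
  refine le_trans (Submodule.smul_mono_left hsp) ?_
  rw [Submodule.sup_smul, pow_one, ← smul_eq_mul, Submodule.smul_assoc]
  exact sup_le le_sup_right (le_sup_of_le_left le_rfl)

lemma aux_trunc [IsLocalRing R] [IsNoetherianRing R] [Module.Finite R M] {s : ℕ}
    (y : Fin s → R) (hy : ∀ i, y i ∈ IsLocalRing.maximalIdeal R)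
    (hdec : HasParamDecomp R M y) :
    ∀ (d t : ℕ) (ht : t + d = s) (_ : 1 ≤ t),
      HasParamDecomp R M (fun j : Fin t => y (Fin.castLE (ht ▸ Nat.le_add_right t d) j)) := by
  intro d
  induction d with
  | zero =>
    intro t ht h1t
    have hts : t = s := by omega
    subst hts
    have he : (fun j : Fin t => y (Fin.castLE (ht ▸ Nat.le_add_right t 0) j)) = y := by
      funext j
      rfl
    rw [he]
    exact hdec
  | succ d ih =>
    intro t ht h1t
    have hprev := ih (t + 1) (by omega) (by omega)
    have hdesc := aux_descent h1t _ (hy _) (fun j => hy _) hprev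
    have he : (fun j : Fin (t + 1) =>
        y (Fin.castLE ((by omega : t + 1 + d = s) ▸ Nat.le_add_right (t + 1) d) j)) ∘
          Fin.castSucc = fun j : Fin t => y (Fin.castLE (ht ▸ Nat.le_add_right t (d + 1)) j) := by
      funext j
      rfl
    rw [he] at hdesc
    exact hdesc


end AuxLemmas

/-- **Lemma 3.3.** If `y₁,…,y_s` in `𝔪` has the property of parametric decomposition,
then `y_{i+1}^k M ∩ (y₁,…,y_i)^m M ⊆ y_{i+1}^k(y₁,…,y_{i+1})M + (y₁,…,y_i)^{m+1} M`
for all `k, m ≥ 1` and `1 ≤ i < s`. -/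
theorem stmt_10 {R : Type*} [CommRing R] [IsLocalRing R] [IsNoetherianRing R]
    {M : Type*} [AddCommGroup M] [Module R M] [Module.Finite R M]
    {s : ℕ} (hs : 1 ≤ s) (y : Fin s → R) (hy : ∀ i, y i ∈ maximalIdeal R)
    (hdec : HasParamDecomp R M y) :
    ∀ (i : ℕ) (hi : i < s) (k m : ℕ), 1 ≤ i → 1 ≤ k → 1 ≤ m →
      (Ideal.span {y ⟨i, hi⟩ ^ k} • (⊤ : Submodule R M)) ⊓
          ((Ideal.span {r : R | ∃ j : Fin s, (j : ℕ) < i ∧ r = y j}) ^ m •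
            (⊤ : Submodule R M)) ≤
        Ideal.span {y ⟨i, hi⟩ ^ k} •
            ((Ideal.span {r : R | ∃ j : Fin s, (j : ℕ) < i + 1 ∧ r = y j}) •
              (⊤ : Submodule R M)) ⊔
          (Ideal.span {r : R | ∃ j : Fin s, (j : ℕ) < i ∧ r = y j}) ^ (m + 1) •
            (⊤ : Submodule R M) := by
  intro i hi k m h1i h1k h1m
  have hi1 : i + 1 ≤ s := hi
  set z : Fin (i + 1) → R := fun j => y (Fin.castLE hi1 j) with hz
  have hzd : HasParamDecomp R M z :=
    aux_trunc y hy hdec (s - (i + 1)) (i + 1) (by omega) (by omega)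
  have e1 : {r : R | ∃ j : Fin s, (j : ℕ) < i ∧ r = y j} =
      Set.range (z ∘ Fin.castSucc) := by
    ext x
    constructor
    · rintro ⟨j, hj, rfl⟩
      exact ⟨⟨(j : ℕ), hj⟩, (congrArg y (Fin.ext rfl)).symm ▸ rfl⟩
    · rintro ⟨j, rfl⟩
      exact ⟨⟨(j : ℕ), Nat.lt_trans j.isLt hi⟩, j.isLt, congrArg y (Fin.ext rfl)⟩
  have e2 : {r : R | ∃ j : Fin s, (j : ℕ) < i + 1 ∧ r = y j} = Set.range z := by
    ext x
    constructor
    · rintro ⟨j, hj, rfl⟩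
      exact ⟨⟨(j : ℕ), hj⟩, (congrArg y (Fin.ext rfl)).symm ▸ rfl⟩
    · rintro ⟨j, rfl⟩
      exact ⟨⟨(j : ℕ), Nat.lt_of_lt_of_le j.isLt hi1⟩, j.isLt, congrArg y (Fin.ext rfl)⟩
  have e3 : y ⟨i, hi⟩ = z (Fin.last i) := congrArg y (Fin.ext rfl)
  rw [e1, e2, e3]
  exact aux_last z k m h1k h1m hzd
end

section
/- Let R be a commutative ring, M an R-module, and y_1, …, y_{i+1} elements of R. Then for all integers k, m ≥ 1 one has the inclusion (y_1,…,y_i,y_{i+1})^{k+m} M ⊆ y_{i+1}^k (y_1,…,y_i,y_{i+1})M + (y_1,…,y_i)^{m+1} M. -/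
open IsLocalRing

private lemma stmt_11_aux {R : Type*} [CommRing R] (A B I : Ideal R) (hAI : A ≤ I)
    (hBI : B ≤ I) (hI : I ≤ A ⊔ B) (k m : ℕ) (hk : 1 ≤ k) (hm : 1 ≤ m) :
    I ^ (k + m) ≤ B ^ k * I ⊔ A ^ (m + 1) := by
  have h1 : I ^ (k + m) ≤ (A + B) ^ (k + m) :=
    pow_le_pow_left' (by rwa [Submodule.add_eq_sup]) _
  rw [add_pow] at h1
  refine h1.trans (Finset.sum_induction _ (fun J => J ≤ B ^ k * I ⊔ A ^ (m + 1))
    (fun a b ha hb => (Submodule.add_eq_sup a b) ▸ sup_le ha hb) bot_le ?_)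
  intro j hj
  rw [Finset.mem_range] at hj
  have hterm : A ^ j * B ^ (k + m - j) * (((k + m).choose j : ℕ) : Ideal R) ≤
      A ^ j * B ^ (k + m - j) := Ideal.mul_le_left
  refine hterm.trans ?_
  by_cases hjm : j ≤ m
  · refine le_sup_of_le_left ?_
    have hb : k + m - j = k + (m - j) := by omega
    have hX : A ^ j * B ^ (m - j) ≤ I := by
      calc A ^ j * B ^ (m - j) ≤ I ^ j * I ^ (m - j) :=
            mul_le_mul' (pow_le_pow_left' hAI j) (pow_le_pow_left' hBI _)
        _ = I ^ m := by rw [← pow_add]; congr 1; omega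
        _ ≤ I := Ideal.pow_le_self (by omega)
    calc A ^ j * B ^ (k + m - j) = B ^ k * (A ^ j * B ^ (m - j)) := by
          rw [hb, pow_add]; ring
      _ ≤ B ^ k * I := mul_le_mul_right hX _
  · refine le_sup_of_le_right ?_
    calc A ^ j * B ^ (k + m - j) ≤ A ^ j := Ideal.mul_le_left
      _ ≤ A ^ (m + 1) := Ideal.pow_le_pow_right (by omega)

/-- Over any commutative ring, `(y₁,…,y_{i+1})^{k+m} M ⊆
y_{i+1}^k(y₁,…,y_{i+1})M + (y₁,…,y_i)^{m+1} M` for all `k, m ≥ 1`. -/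
theorem stmt_11 {R : Type*} [CommRing R] {M : Type*} [AddCommGroup M] [Module R M]
    {i : ℕ} (y : Fin (i + 1) → R) (k m : ℕ) (hk : 1 ≤ k) (hm : 1 ≤ m) :
    (Ideal.span (Set.range y)) ^ (k + m) • (⊤ : Submodule R M) ≤
      Ideal.span {y (Fin.last i) ^ k} •
          (Ideal.span (Set.range y) • (⊤ : Submodule R M)) ⊔
        (Ideal.span {r : R | ∃ j : Fin (i + 1), (j : ℕ) < i ∧ r = y j}) ^ (m + 1) •
          (⊤ : Submodule R M) := by
  set I := Ideal.span (Set.range y) with hIdef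
  set Z := Ideal.span {y (Fin.last i)} with hZdef
  set A := Ideal.span {r : R | ∃ j : Fin (i + 1), (j : ℕ) < i ∧ r = y j} with hAdef
  have hAI : A ≤ I := by
    rw [hAdef, Ideal.span_le]
    rintro r ⟨j, _, rfl⟩
    exact Ideal.subset_span ⟨j, rfl⟩
  have hZI : Z ≤ I := by
    rw [hZdef, Ideal.span_le]
    rintro r rfl
    exact Ideal.subset_span ⟨Fin.last i, rfl⟩
  have hI : I ≤ A ⊔ Z := by
    rw [hIdef, Ideal.span_le]
    rintro r ⟨j, rfl⟩
    by_cases hj : (j : ℕ) < i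
    · exact le_sup_left (α := Ideal R) (Ideal.subset_span ⟨j, hj, rfl⟩)
    · have hj' : j = Fin.last i := Fin.ext (by have := j.isLt; simp [Fin.last]; omega)
      subst hj'
      exact le_sup_right (α := Ideal R) (Ideal.subset_span rfl)
  have key : I ^ (k + m) ≤ Z ^ k * I ⊔ A ^ (m + 1) :=
    stmt_11_aux A Z I hAI hZI hI k m hk hm
  calc I ^ (k + m) • (⊤ : Submodule R M) ≤ (Z ^ k * I ⊔ A ^ (m + 1)) • (⊤ : Submodule R M) :=
        Submodule.smul_mono_left key
    _ = (Z ^ k * I) • (⊤ : Submodule R M) ⊔ A ^ (m + 1) • (⊤ : Submodule R M) :=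
        Submodule.sup_smul _ _ _
    _ = Ideal.span {y (Fin.last i) ^ k} • (I • (⊤ : Submodule R M)) ⊔
          A ^ (m + 1) • (⊤ : Submodule R M) := by
        rw [← Ideal.span_singleton_pow, ← smul_eq_mul, Submodule.smul_assoc]
end

section
/- Let (R, 𝔪) be a commutative Noetherian local ring, M a finitely generated R-module of dimension d, and x_1, …, x_d a system of parameters of M having the property of parametric decomposition. Then for all 1 ≤ i < j ≤ d and all n ≥ 1 one has x_j^n M ∩ (x_1,…,x_i)M ⊆ x_j^n (x_j, x_1,…,x_i)M. -/
open IsLocalRing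

section PDAux

variable {R : Type*} [CommRing R] {d : ℕ}

private def pdMon (x : Fin d → R) (β : Fin d → ℕ) : R := ∏ l, x l ^ β l

private lemma pdMon_add (x : Fin d → R) (β γ : Fin d → ℕ) :
    pdMon x (β + γ) = pdMon x β * pdMon x γ := by
  simp only [pdMon, Pi.add_apply, pow_add]
  rw [Finset.prod_mul_distrib]

private lemma pdMon_single (x : Fin d → R) (l : Fin d) (c : ℕ) :
    pdMon x (Pi.single l c) = x l ^ c := by
  rw [pdMon, Finset.prod_eq_single l]
  · rw [Pi.single_eq_same]
  · intro p _ hp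
    rw [Pi.single_eq_of_ne hp, pow_zero]
  · intro h
    exact absurd (Finset.mem_univ l) h

private lemma pdMon_factor (x : Fin d → R) {β γ : Fin d → ℕ} (h : γ ≤ β) :
    pdMon x β = pdMon x γ * pdMon x (β - γ) := by
  rw [← pdMon_add]
  congr 1
  funext l
  have h2 : γ l ≤ β l := h l
  simp only [Pi.add_apply, Pi.sub_apply]
  omega

private lemma pdMon_mem_span (x : Fin d → R) {β γ : Fin d → ℕ} (h : γ ≤ β) :
    pdMon x β ∈ Ideal.span {pdMon x γ} := by
  rw [pdMon_factor x h]
  exact Ideal.mul_mem_right _ _ (Ideal.subset_span rfl)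

private lemma pdMon_mem_pow (x : Fin d → R) (β : Fin d → ℕ) :
    pdMon x β ∈ (Ideal.span (Set.range x)) ^ (∑ l, β l) := by
  classical
  have key : ∀ s : Finset (Fin d),
      (∏ l ∈ s, x l ^ β l) ∈ (Ideal.span (Set.range x)) ^ (∑ l ∈ s, β l) := by
    intro s
    induction s using Finset.cons_induction with
    | empty => simp [Ideal.one_eq_top]
    | cons a s ha ih =>
      rw [Finset.prod_cons, Finset.sum_cons, pow_add]
      exact Ideal.mul_mem_mul (Ideal.pow_mem_pow (Ideal.subset_span (Set.mem_range_self a)) _) ih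
  exact key Finset.univ

private lemma pd_pow_le_monSpan (x : Fin d → R) (m : ℕ) :
    (Ideal.span (Set.range x)) ^ m ≤
      Ideal.span {r : R | ∃ β : Fin d → ℕ, (∑ l, β l) = m ∧ r = pdMon x β} := by
  induction m with
  | zero =>
    have h1 : (1 : R) ∈
        Ideal.span {r : R | ∃ β : Fin d → ℕ, (∑ l, β l) = 0 ∧ r = pdMon x β} :=
      Ideal.subset_span ⟨0, by simp [pdMon]⟩
    rw [pow_zero, Ideal.one_eq_top]
    exact le_of_eq ((Ideal.eq_top_iff_one _).mpr h1).symm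
  | succ m ih =>
    rw [pow_succ]
    refine le_trans (Ideal.mul_mono ih le_rfl) ?_
    rw [Ideal.span_mul_span']
    rw [Ideal.span_le]
    rintro r hr
    obtain ⟨s, ⟨β, hβ, rfl⟩, t, ⟨l, rfl⟩, rfl⟩ := hr
    refine Ideal.subset_span ⟨β + Pi.single l 1, ?_, ?_⟩
    · simp only [Pi.add_apply]
      rw [Finset.sum_add_distrib, hβ]
      simp [Pi.single_apply, Finset.sum_ite_eq']
    · rw [pdMon_add, pdMon_single, pow_one]

variable {M : Type*} [AddCommGroup M] [Module R M]

private lemma pd_span_smul_le (S : Set R) (P : Submodule R M)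
    (h : ∀ r ∈ S, ∀ m : M, r • m ∈ P) :
    Ideal.span S • (⊤ : Submodule R M) ≤ P := by
  rw [Submodule.smul_le]
  intro r hr m _
  induction hr using Submodule.span_induction with
  | mem r hr => exact h r hr m
  | zero => simp only [zero_smul]; exact P.zero_mem
  | add a b _ _ ha hb => rw [add_smul]; exact P.add_mem ha hb
  | smul c a _ ha => rw [smul_eq_mul, mul_smul]; exact P.smul_mem c ha

end PDAux

universe u v

private lemma pd_krull {R : Type u} [CommRing R] [IsLocalRing R] [IsNoetherianRing R]
    {M : Type v} [AddCommGroup M] [Module R M] [Module.Finite R M]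
    (z : M) (hz : ∀ k : ℕ, z ∈ (maximalIdeal R ^ k) • (⊤ : Submodule R M)) : z = 0 := by
  classical
  have hfs : Function.Surjective ((ULift.ringEquiv.symm : R ≃+* ULift.{v} R).toRingHom) :=
    (ULift.ringEquiv.symm : R ≃+* ULift.{v} R).surjective
  haveI : IsLocalRing (ULift.{v} R) := IsLocalRing.of_surjective' _ hfs
  haveI : IsNoetherianRing (ULift.{v} R) := isNoetherianRing_of_ringEquiv R ULift.ringEquiv.symm
  haveI : Module.Finite (ULift.{v} R) (ULift.{u} M) := by
    obtain ⟨s, hs⟩ := Module.Finite.fg_top (R := R) (M := M)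
    refine ⟨⟨s.image ULift.up, ?_⟩⟩
    rw [eq_top_iff]
    rintro ⟨m⟩ -
    have hm : m ∈ Submodule.span R (↑s : Set M) := by rw [hs]; trivial
    have key : ∀ m : M, m ∈ Submodule.span R (↑s : Set M) →
        (ULift.up m : ULift.{u} M) ∈
          Submodule.span (ULift.{v} R) (↑(s.image ULift.up) : Set (ULift.{u} M)) := by
      intro m hm
      induction hm using Submodule.span_induction with
      | mem a ha =>
        exact Submodule.subset_span
          (Finset.mem_coe.mpr (Finset.mem_image_of_mem _ (Finset.mem_coe.mp ha)))
      | zero => exact Submodule.zero_mem _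
      | add a b _ _ hA hB => exact Submodule.add_mem _ hA hB
      | smul r a _ hA => exact Submodule.smul_mem _ (ULift.up r) hA
    exact key m hm
  have hmap : ∀ (JJ : Ideal R) (m : M), m ∈ JJ • (⊤ : Submodule R M) →
      (ULift.up m : ULift.{u} M) ∈
        (JJ.map (ULift.ringEquiv.symm : R ≃+* ULift.{v} R).toRingHom) •
          (⊤ : Submodule (ULift.{v} R) (ULift.{u} M)) := by
    intro JJ m hm
    refine Submodule.smul_induction_on
      (p := fun m => (ULift.up m : ULift.{u} M) ∈
        (JJ.map (ULift.ringEquiv.symm : R ≃+* ULift.{v} R).toRingHom) •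
          (⊤ : Submodule (ULift.{v} R) (ULift.{u} M)))
      hm ?_ ?_
    · intro r hr m' _
      exact Submodule.smul_mem_smul
        (Ideal.mem_map_of_mem (ULift.ringEquiv.symm : R ≃+* ULift.{v} R).toRingHom hr)
        Submodule.mem_top
    · intro a b ha hb
      exact Submodule.add_mem _ ha hb
  have hml : (maximalIdeal R).map (ULift.ringEquiv.symm : R ≃+* ULift.{v} R).toRingHom ≤
      maximalIdeal (ULift.{v} R) := by
    rw [Ideal.map_le_iff_le_comap]
    intro r hr
    rw [Ideal.mem_comap, IsLocalRing.mem_maximalIdeal, mem_nonunits_iff]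
    rw [IsLocalRing.mem_maximalIdeal, mem_nonunits_iff] at hr
    intro hu
    have h2 : IsUnit ((ULift.ringEquiv : ULift.{v} R ≃+* R)
        ((ULift.ringEquiv.symm : R ≃+* ULift.{v} R).toRingHom r)) :=
      hu.map (ULift.ringEquiv : ULift.{v} R ≃+* R)
    have h3 : (ULift.ringEquiv : ULift.{v} R ≃+* R)
        ((ULift.ringEquiv.symm : R ≃+* ULift.{v} R).toRingHom r) = r := by
      simp
    rw [h3] at h2
    exact hr h2
  have hup : ∀ k : ℕ, (ULift.up z : ULift.{u} M) ∈
      (maximalIdeal (ULift.{v} R) ^ k) • (⊤ : Submodule (ULift.{v} R) (ULift.{u} M)) := by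
    intro k
    have h1 := hmap (maximalIdeal R ^ k) z (hz k)
    rw [Ideal.map_pow] at h1
    exact Submodule.smul_mono_left (Ideal.pow_right_mono hml k) h1
  have hbot := Ideal.iInf_pow_smul_eq_bot_of_isLocalRing
    (I := maximalIdeal (ULift.{v} R)) (M := ULift.{u} M)
    (Ideal.IsMaximal.ne_top (maximalIdeal.isMaximal _))
  have hzz : (ULift.up z : ULift.{u} M) ∈ (⊥ : Submodule (ULift.{v} R) (ULift.{u} M)) := by
    rw [← hbot]
    exact Submodule.mem_iInf _ |>.mpr hup
  have hz0 : (ULift.up z : ULift.{u} M) = 0 := by simpa using hzz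
  simpa using congrArg ULift.down hz0

/-- If the system of parameters `x₁,…,x_d` of `M` has the property of parametric
decomposition then `x_j^n M ∩ (x₁,…,x_i)M ⊆ x_j^n(x_j,x₁,…,x_i)M` for `1 ≤ i < j ≤ d`
and all `n ≥ 1`. -/
theorem stmt_13 {R : Type*} [CommRing R] [IsLocalRing R] [IsNoetherianRing R]
    {M : Type*} [AddCommGroup M] [Module R M] [Module.Finite R M]
    {d : ℕ} (hd : moduleDim R M = (d : WithBot ℕ∞))
    (x : Fin d → R) (hx : IsSOP R M x) (hdec : HasParamDecomp R M x) :
    ∀ (i : ℕ) (j : Fin d), 1 ≤ i → i ≤ (j : ℕ) → ∀ n : ℕ, 1 ≤ n →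
      (Ideal.span {x j ^ n} • (⊤ : Submodule R M)) ⊓
          (Ideal.span {r : R | ∃ l : Fin d, (l : ℕ) < i ∧ r = x l} •
            (⊤ : Submodule R M)) ≤
        Ideal.span {x j ^ n} •
          ((Ideal.span {x j} ⊔ Ideal.span {r : R | ∃ l : Fin d, (l : ℕ) < i ∧ r = x l}) •
            (⊤ : Submodule R M)) := by
  intro i j hi hij n hn
  classical
  set q : Ideal R := Ideal.span (Set.range x) with hq
  set J : Ideal R := Ideal.span {r : R | ∃ l : Fin d, (l : ℕ) < i ∧ r = x l} with hJ
  set T : Submodule R M := (Ideal.span {x j ^ n} * J) • (⊤ : Submodule R M) with hT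
  set C : Submodule R M :=
    (J • (⊤ : Submodule R M)) ⊓ (Ideal.span {x j ^ n} • (⊤ : Submodule R M)) with hC
  set V : ℕ → Submodule R M := fun k =>
    ⨆ (β : Fin d → ℕ) (_ : (∑ l, β l) = k ∧
      ¬(n ≤ β j ∧ ∃ l : Fin d, (l : ℕ) < i ∧ 1 ≤ β l)),
      Ideal.span {pdMon x β} • (⊤ : Submodule R M) with hV
  -- q is contained in the maximal ideal
  have hqm : q ≤ maximalIdeal R := by
    rw [hq, Ideal.span_le]
    rintro r ⟨l, rfl⟩
    exact hx.1 l
  -- Step 1 (the engine): V k ⊓ C is contained in q^(k+1) M, by parametric decomposition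
  have engine : ∀ k : ℕ, V k ⊓ C ≤ (q ^ (k + 1)) • (⊤ : Submodule R M) := by
    intro k
    have hde := hdec (k + 1) (by omega)
    rw [← hq] at hde
    rw [hde]
    refine le_iInf fun α => le_iInf fun hα => ?_
    obtain ⟨hα1, hα2⟩ := hα
    have hαsum : ∑ l, α l = d + k := by omega
    by_cases hcase1 : α j ≤ n
    · -- use the x_j^n factor
      refine le_trans (le_trans inf_le_right inf_le_right) (Submodule.smul_mono_left ?_)
      rw [Ideal.span_le]
      rintro r rfl
      have he : x j ^ n = x j ^ α j * x j ^ (n - α j) := by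
        rw [← pow_add, Nat.add_sub_cancel' hcase1]
      rw [he]
      exact Ideal.mul_mem_right _ _ (Ideal.subset_span ⟨j, rfl⟩)
    by_cases hcase2 : ∀ l : Fin d, (l : ℕ) < i → α l = 1
    · -- use the (x_1,…,x_i) factor
      refine le_trans (le_trans inf_le_right inf_le_left) (Submodule.smul_mono_left ?_)
      rw [hJ, Ideal.span_le]
      rintro r ⟨l, hl, rfl⟩
      have he : x l = x l ^ α l := by rw [hcase2 l hl, pow_one]
      rw [he]
      exact Ideal.subset_span ⟨l, rfl⟩
    · -- use the admissible monomials
      push_neg at hcase2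
      obtain ⟨l₀, hl₀i, hl₀⟩ := hcase2
      have hl₀2 : 2 ≤ α l₀ := by have := hα1 l₀; omega
      have hjn : n + 1 ≤ α j := by omega
      refine le_trans inf_le_left ?_
      simp only [hV]
      refine iSup_le fun β => iSup_le fun hβ => Submodule.smul_mono_left ?_
      rw [Ideal.span_le]
      rintro r rfl
      have hex : ∃ l, α l ≤ β l := by
        by_contra hco
        push_neg at hco
        have hle : ∀ l ∈ Finset.univ, β l + 1 ≤ α l := fun l _ => hco l
        have hsum2 : (∑ l, (β l + 1)) = ∑ l, α l := by
          rw [Finset.sum_add_distrib, Finset.sum_const, hβ.1, hαsum]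
          simp only [smul_eq_mul, mul_one, Finset.card_univ, Fintype.card_fin]
          omega
        have heq := (Finset.sum_eq_sum_iff_of_le hle).mp hsum2
        have hβj : n ≤ β j := by have := heq j (Finset.mem_univ j); omega
        have hβl₀ : 1 ≤ β l₀ := by have := heq l₀ (Finset.mem_univ l₀); omega
        exact hβ.2 ⟨hβj, ⟨l₀, hl₀i, hβl₀⟩⟩
      obtain ⟨l, hl⟩ := hex
      have h1 : Pi.single l (α l) ≤ β := by
        intro p
        rcases eq_or_ne p l with rfl | hp
        · rw [Pi.single_eq_same]; exact hl
        · rw [Pi.single_eq_of_ne hp]; exact Nat.zero_le _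
      have h2 := pdMon_factor x h1
      rw [pdMon_single] at h2
      rw [h2]
      exact Ideal.mul_mem_right _ _ (Ideal.subset_span ⟨l, rfl⟩)
  -- Step 2 (the splitting): q^(k+1) M ≤ (T ⊓ C) ⊔ V (k+1)
  have split : ∀ k : ℕ, (q ^ (k + 1)) • (⊤ : Submodule R M) ≤ (T ⊓ C) ⊔ V (k + 1) := by
    intro k
    have h0 : q ^ (k + 1) ≤
        Ideal.span {r : R | ∃ β : Fin d → ℕ, (∑ l, β l) = k + 1 ∧ r = pdMon x β} := by
      rw [hq]
      exact pd_pow_le_monSpan x (k + 1)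
    refine le_trans (Submodule.smul_mono_left h0) (pd_span_smul_le _ _ ?_)
    rintro r ⟨β, hβsum, rfl⟩ m
    by_cases hb : n ≤ β j ∧ ∃ l : Fin d, (l : ℕ) < i ∧ 1 ≤ β l
    · obtain ⟨hbj, l₀, hl₀i, hbl₀⟩ := hb
      have hl₀j : l₀ ≠ j := by
        intro h
        rw [h] at hl₀i
        omega
      have hsingle : (Pi.single j n : Fin d → ℕ) ≤ β := by
        intro p
        rcases eq_or_ne p j with rfl | hp
        · rw [Pi.single_eq_same]; exact hbj
        · rw [Pi.single_eq_of_ne hp]; exact Nat.zero_le _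
      have hsingle₀ : (Pi.single l₀ 1 : Fin d → ℕ) ≤ β := by
        intro p
        rcases eq_or_ne p l₀ with rfl | hp
        · rw [Pi.single_eq_same]; exact hbl₀
        · rw [Pi.single_eq_of_ne hp]; exact Nat.zero_le _
      have hγβ : (Pi.single j n + Pi.single l₀ 1 : Fin d → ℕ) ≤ β := by
        intro p
        simp only [Pi.add_apply]
        rcases eq_or_ne p j with rfl | hpj
        · rw [Pi.single_eq_same, Pi.single_eq_of_ne (Ne.symm hl₀j), add_zero]
          exact hbj
        rcases eq_or_ne p l₀ with rfl | hpl
        · rw [Pi.single_eq_of_ne hl₀j, Pi.single_eq_same, zero_add]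
          exact hbl₀
        · rw [Pi.single_eq_of_ne hpj, Pi.single_eq_of_ne hpl]
          exact Nat.zero_le _
      have hmon : pdMon x β
          = x j ^ n * (x l₀ * pdMon x (β - (Pi.single j n + Pi.single l₀ 1))) := by
        rw [pdMon_factor x hγβ, pdMon_add, pdMon_single, pdMon_single, pow_one, mul_assoc]
      have hT1 : pdMon x β ∈ Ideal.span {x j ^ n} * J := by
        rw [hmon]
        refine Ideal.mul_mem_mul (Ideal.subset_span rfl) ?_
        rw [hJ]
        exact Ideal.mul_mem_right _ _ (Ideal.subset_span ⟨l₀, hl₀i, rfl⟩)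
      have hJ1 : pdMon x β ∈ J := by
        rw [pdMon_factor x hsingle₀, pdMon_single, pow_one, hJ]
        exact Ideal.mul_mem_right _ _ (Ideal.subset_span ⟨l₀, hl₀i, rfl⟩)
      have hN1 : pdMon x β ∈ Ideal.span {x j ^ n} := by
        have := pdMon_mem_span x hsingle
        rwa [pdMon_single] at this
      refine Submodule.mem_sup_left (Submodule.mem_inf.mpr ⟨?_, Submodule.mem_inf.mpr ⟨?_, ?_⟩⟩)
      · rw [hT]
        exact Submodule.smul_mem_smul hT1 Submodule.mem_top
      · exact Submodule.smul_mem_smul hJ1 Submodule.mem_top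
      · exact Submodule.smul_mem_smul hN1 Submodule.mem_top
    · refine Submodule.mem_sup_right ?_
      have hle : Ideal.span {pdMon x β} • (⊤ : Submodule R M) ≤ V (k + 1) := by
        simp only [hV]
        exact le_iSup₂_of_le β ⟨hβsum, hb⟩ le_rfl
      exact hle (Submodule.smul_mem_smul (Ideal.subset_span rfl) Submodule.mem_top)
  -- Step 3: the inductive step, using the modular law
  have step : ∀ k : ℕ, V k ⊓ C ≤ T ⊔ (V (k + 1) ⊓ C) := by
    intro k
    have h1 : V k ⊓ C ≤ ((T ⊓ C) ⊔ V (k + 1)) ⊓ C :=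
      le_inf (le_trans (engine k) (split k)) inf_le_right
    have h2 : ((T ⊓ C) ⊔ V (k + 1)) ⊓ C = (T ⊓ C) ⊔ (V (k + 1) ⊓ C) :=
      sup_inf_assoc_of_le _ inf_le_right
    refine le_trans h1 (le_of_eq h2 |>.trans ?_)
    exact sup_le_sup inf_le_left le_rfl
  -- Step 4: iterate
  have main : ∀ t : ℕ, V n ⊓ C ≤ T ⊔ (V (n + t) ⊓ C) := by
    intro t
    induction t with
    | zero => exact le_sup_right
    | succ t ih =>
      refine le_trans ih ?_
      refine le_trans (sup_le_sup_left (step (n + t)) T) ?_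
      exact sup_le le_sup_left le_rfl
  -- Step 5: V k is contained in 𝔪^k M
  have WleM : ∀ k : ℕ, V k ≤ (maximalIdeal R ^ k) • (⊤ : Submodule R M) := by
    intro k
    simp only [hV]
    refine iSup_le fun β => iSup_le fun hβ => Submodule.smul_mono_left ?_
    rw [Ideal.span_le]
    rintro r rfl
    have h1 := pdMon_mem_pow x β
    rw [hβ.1, ← hq] at h1
    exact Ideal.pow_right_mono hqm k h1
  -- Step 6: Krull intersection in M/T
  intro z hz
  have hzW : z ∈ V n ⊓ C := by
    refine Submodule.mem_inf.mpr ⟨?_, Submodule.mem_inf.mpr ⟨hz.2, hz.1⟩⟩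
    have hstart : Ideal.span {x j ^ n} • (⊤ : Submodule R M) ≤ V n := by
      have h1 : x j ^ n = pdMon x (Pi.single j n) := (pdMon_single x j n).symm
      simp only [hV]
      rw [h1]
      refine le_iSup₂_of_le (Pi.single j n) ⟨?_, ?_⟩ le_rfl
      · simp [Pi.single_apply, Finset.sum_ite_eq']
      · rintro ⟨-, l, hli, hl1⟩
        have hlj : l ≠ j := by
          intro h
          rw [h] at hli
          omega
        rw [Pi.single_eq_of_ne hlj] at hl1
        omega
    exact hstart hz.1
  have hzT : ∀ k : ℕ, z ∈ T ⊔ (maximalIdeal R ^ k) • (⊤ : Submodule R M) := by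
    intro k
    have h1 : V n ⊓ C ≤ T ⊔ (maximalIdeal R ^ (n + k)) • (⊤ : Submodule R M) :=
      le_trans (main k) (sup_le_sup_left (le_trans inf_le_left (WleM (n + k))) T)
    have h2 : (maximalIdeal R ^ (n + k)) • (⊤ : Submodule R M)
        ≤ (maximalIdeal R ^ k) • (⊤ : Submodule R M) :=
      Submodule.smul_mono_left (Ideal.pow_le_pow_right (by omega))
    exact (le_trans h1 (sup_le_sup_left h2 T)) hzW
  have hq0 : ∀ k : ℕ, T.mkQ z ∈ (maximalIdeal R ^ k) • (⊤ : Submodule R (M ⧸ T)) := by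
    intro k
    obtain ⟨a, ha, b, hb, hab⟩ := Submodule.mem_sup.mp (hzT k)
    have hzb : T.mkQ z = T.mkQ b := by
      rw [← hab]
      have : T.mkQ a = 0 := (Submodule.Quotient.mk_eq_zero T).mpr ha
      simp [map_add, this]
    rw [hzb]
    have h3 : T.mkQ b ∈ (maximalIdeal R ^ k) • Submodule.map T.mkQ (⊤ : Submodule R M) := by
      rw [← Submodule.map_smul'']
      exact Submodule.mem_map_of_mem hb
    exact Submodule.smul_mono le_rfl le_top h3
  have hz0 : T.mkQ z = 0 := pd_krull (T.mkQ z) hq0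
  have hzT' : z ∈ T := by
    rwa [← Submodule.Quotient.mk_eq_zero T]
  -- Step 7: T is contained in the target
  have hTle : T ≤ Ideal.span {x j ^ n} •
      ((Ideal.span {x j} ⊔ J) • (⊤ : Submodule R M)) := by
    rw [hT, mul_smul]
    exact Submodule.smul_mono le_rfl (Submodule.smul_mono_left le_sup_right)
  exact hTle hzT'
end

section
/- Let (R, 𝔪) be a commutative Noetherian local ring, M a finitely generated R-module with dimension filtration D_0 ⊂ D_1 ⊂ ⋯ ⊂ D_t = M and d_i = dim D_i, and let 0 = ⋂_{𝔭 ∈ Ass M} N(𝔭) be a reduced primary decomposition of the zero submodule of M, where N(𝔭) is 𝔭-primary. Then D_i = ⋂_{𝔭 ∈ Ass M, dim(R/𝔭) ≥ d_{i+1}} N(𝔭) for all i = 0, …, t−1. -/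
open Ideal

section Aux

variable {R : Type*} [CommRing R]

/-- product of elements not in a prime is not in the prime -/
lemma aux_prod_not_mem {P : Ideal R} (hP : P.IsPrime) {ι : Type*} [DecidableEq ι]
    (T : Finset ι) (g : ι → R) (h : ∀ r ∈ T, g r ∉ P) : (∏ r ∈ T, g r) ∉ P := by
  classical
  induction T using Finset.induction_on with
  | empty => simpa using (Ideal.ne_top_iff_one P).1 hP.ne_top
  | @insert a s ha ih =>
    rw [Finset.prod_insert ha]
    intro hmem
    rcases hP.mem_or_mem hmem with h1 | h2
    · exact h a (Finset.mem_insert_self a s) h1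
    · exact ih (fun r hr => h r (Finset.mem_insert_of_mem hr)) h2

variable (P : Ideal R) (hP : P.IsPrime) {E : Type*} [AddCommGroup E] [Module R E]

/-- the saturation at `P` of the annihilator of `x`. -/
def satAnn (x : E) : Ideal R where
  carrier := {r | ∃ s, s ∉ P ∧ (s * r) • x = 0}
  zero_mem' := ⟨1, (Ideal.ne_top_iff_one P).1 hP.ne_top, by simp⟩
  add_mem' := by
    rintro a b ⟨s, hs, h⟩ ⟨s', hs', h'⟩
    refine ⟨s * s', fun hm => (hP.mem_or_mem hm).elim hs hs', ?_⟩
    have : (s * s') * (a + b) = s' * (s * a) + s * (s' * b) := by ring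
    rw [this, add_smul, mul_smul, h, mul_smul, h', smul_zero, smul_zero, add_zero]
  smul_mem' := by
    rintro c r ⟨s, hs, h⟩
    exact ⟨s, hs, by rw [smul_eq_mul, show s * (c * r) = c * (s * r) by ring, mul_smul, h,
      smul_zero]⟩

lemma mem_satAnn {x : E} {r : R} :
    r ∈ satAnn P hP x ↔ ∃ s, s ∉ P ∧ (s * r) • x = 0 := Iff.rfl

end Aux

section Key

variable {R : Type*} [CommRing R] [IsNoetherianRing R]
  {E : Type*} [AddCommGroup E] [Module R E] [Module.Finite R E]

lemma satAnn_ne_top_iff {P : Ideal R} (hP : P.IsPrime) (x : E) :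
    satAnn P hP x ≠ ⊤ ↔ ∀ s : R, s • x = 0 → s ∈ P := by
  constructor
  · intro h s hs
    by_contra hsP
    exact h ((Ideal.eq_top_iff_one _).2 ⟨s, hsP, by rw [mul_one]; exact hs⟩)
  · intro h ht
    obtain ⟨s, hs, hsx⟩ := (Ideal.eq_top_iff_one _).1 ht
    rw [mul_one] at hsx
    exact hs (h s hsx)

/-- Key lemma: over a Noetherian ring, any prime containing the annihilator of a f.g. module
contains an associated prime of the module. -/
lemma exists_assocPrime_le {P : Ideal R} (hP : P.IsPrime)
    (hle : Module.annihilator R E ≤ P) : ∃ Q ∈ associatedPrimes R E, Q ≤ P := by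
  classical
  -- nonemptiness: some x with satAnn ≠ ⊤
  have hex : ∃ x : E, satAnn P hP x ≠ ⊤ := by
    by_contra hc
    push_neg at hc
    obtain ⟨S, hS⟩ : (⊤ : Submodule R E).FG := Module.Finite.fg_top
    have hch : ∀ y : E, ∃ s, s ∉ P ∧ s • y = 0 := by
      intro y
      obtain ⟨s, hs, hsy⟩ := (Ideal.eq_top_iff_one _).1 (hc y)
      rw [mul_one] at hsy
      exact ⟨s, hs, hsy⟩
    choose g hg1 hg2 using hch
    set s : R := ∏ y ∈ S, g y with hsdef
    have hsP : s ∉ P := aux_prod_not_mem hP S g (fun r _ => hg1 r)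
    apply hsP
    apply hle
    rw [Module.mem_annihilator]
    intro m
    have hm : m ∈ Submodule.span R (S : Set E) := by rw [hS]; trivial
    induction hm using Submodule.span_induction with
    | mem y hy =>
      have := Finset.prod_erase_mul S g hy
      rw [hsdef, ← this, mul_smul, hg2 y, smul_zero]
    | zero => rw [smul_zero]
    | add a b _ _ ha hb => rw [smul_add, ha, hb, add_zero]
    | smul c a _ ha => rw [smul_comm, ha, smul_zero]
  obtain ⟨x₀, hx₀⟩ := hex
  -- maximal element
  obtain ⟨J, ⟨⟨x, rfl⟩, hJt⟩, hmax⟩ := set_has_maximal_iff_noetherian.mpr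
    (inferInstance : IsNoetherianRing R)
    {I : Ideal R | (∃ y : E, I = satAnn P hP y) ∧ I ≠ ⊤} ⟨_, ⟨x₀, rfl⟩, hx₀⟩
  -- satAnn P hP x is prime
  have hxP : ∀ s : R, s • x = 0 → s ∈ P := (satAnn_ne_top_iff hP x).1 hJt
  have hprime : (satAnn P hP x).IsPrime := by
    refine ⟨hJt, ?_⟩
    intro a b hab
    rw [or_iff_not_imp_right]
    intro hb
    obtain ⟨s, hs, hab0⟩ := hab
    -- y := (s*b) • x
    set y : E := (s * b) • x with hy
    have hcy_ne : satAnn P hP y ≠ ⊤ := by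
      rw [satAnn_ne_top_iff]
      intro u huy
      by_contra huP
      apply hb
      refine ⟨u * s, fun hm => (hP.mem_or_mem hm).elim huP hs, ?_⟩
      rw [show (u * s) * b = u * (s * b) by ring, mul_smul, ← hy, huy]
    have hle' : satAnn P hP x ≤ satAnn P hP y := by
      rintro r ⟨u, hu, hurx⟩
      exact ⟨u, hu, by rw [hy, smul_comm, hurx, smul_zero]⟩
    have heq : satAnn P hP x = satAnn P hP y :=
      hle'.lt_or_eq.resolve_left (hmax _ ⟨⟨y, rfl⟩, hcy_ne⟩)
    rw [heq]
    refine ⟨1, (Ideal.ne_top_iff_one P).1 hP.ne_top, ?_⟩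
    rw [hy, one_mul, smul_smul, show a * (s * b) = s * (a * b) by ring, hab0]
  have hQP : satAnn P hP x ≤ P := by
    rintro r ⟨s, hs, hsr⟩
    rcases hP.mem_or_mem (hxP _ hsr) with h | h
    · exact absurd h hs
    · exact h
  -- satAnn P hP x is an associated prime
  obtain ⟨T, hT⟩ : (satAnn P hP x).FG := IsNoetherian.noetherian _
  have hchoose : ∀ r : R, ∃ s, s ∉ P ∧ (r ∈ satAnn P hP x → (s * r) • x = 0) := by
    intro r
    by_cases hr : r ∈ satAnn P hP x
    · obtain ⟨s, hs, h⟩ := hr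
      exact ⟨s, hs, fun _ => h⟩
    · exact ⟨1, (Ideal.ne_top_iff_one P).1 hP.ne_top, fun h => absurd h hr⟩
  choose g hg1 hg2 using hchoose
  set s : R := ∏ r ∈ T, g r with hsdef
  have hsP : s ∉ P := aux_prod_not_mem hP T g (fun r _ => hg1 r)
  set y : E := s • x with hy
  have hTmem : ∀ r ∈ T, r ∈ satAnn P hP x := by
    intro r hr
    rw [← hT]
    exact Submodule.subset_span hr
  refine ⟨satAnn P hP x, isAssociatedPrime_iff.2 ⟨hprime, y, ?_⟩, hQP⟩
  apply le_antisymm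
  · -- satAnn ≤ ann y
    rw [← hT, Ideal.span_le]
    intro r hr
    rw [SetLike.mem_coe, Submodule.mem_colon_singleton, Submodule.mem_bot]
    have := Finset.prod_erase_mul T g hr
    rw [hy, smul_smul, hsdef, ← this, show r * ((∏ u ∈ T.erase r, g u) * g r)
      = (∏ u ∈ T.erase r, g u) * (g r * r) by ring, mul_smul, hg2 r (hTmem r hr), smul_zero]
  · intro r hr
    rw [Submodule.mem_colon_singleton, Submodule.mem_bot] at hr
    exact ⟨s, hsP, by rw [mul_comm, mul_smul, ← hy, hr]⟩

end Key

section Dim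

variable {R : Type*} [CommRing R]

lemma dimQuot_mono {I J : Ideal R} (h : I ≤ J) :
    ringKrullDim (R ⧸ J) ≤ ringKrullDim (R ⧸ I) := by
  refine ringKrullDim_le_of_surjective (Ideal.Quotient.factor h) ?_
  intro y
  obtain ⟨x, rfl⟩ := Ideal.Quotient.mk_surjective y
  exact ⟨Ideal.Quotient.mk I x, Ideal.Quotient.factor_mk h x⟩

lemma length_le_dimQuot {I s : Ideal R} (p : LTSeries (PrimeSpectrum (R ⧸ I)))
    (h : s ≤ (p.head.asIdeal).comap (Ideal.Quotient.mk I)) :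
    (p.length : WithBot ℕ∞) ≤ ringKrullDim (R ⧸ s) := by
  have hmem : ∀ j, s ≤ ((p j).asIdeal).comap (Ideal.Quotient.mk I) := by
    intro j
    refine h.trans (Ideal.comap_mono ?_)
    exact (PrimeSpectrum.asIdeal_le_asIdeal _ _).2 (p.monotone (Fin.zero_le j))
  have hker : ∀ j, RingHom.ker (Ideal.Quotient.mk s) ≤
      ((p j).asIdeal).comap (Ideal.Quotient.mk I) := by
    intro j; rw [Ideal.mk_ker]; exact hmem j
  haveI hpr : ∀ j, ((((p j).asIdeal).comap (Ideal.Quotient.mk I)).map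
      (Ideal.Quotient.mk s)).IsPrime := fun j =>
    Ideal.map_isPrime_of_surjective Ideal.Quotient.mk_surjective (hker j)
  let q : LTSeries (PrimeSpectrum (R ⧸ s)) :=
    ⟨p.length, fun j => ⟨_, hpr j⟩, by
      intro i
      have hlt : ((p i.castSucc).asIdeal).comap (Ideal.Quotient.mk I) <
          ((p i.succ).asIdeal).comap (Ideal.Quotient.mk I) := by
        have hstep : p.toFun i.castSucc < p.toFun i.succ := p.step i
        rw [← PrimeSpectrum.asIdeal_lt_asIdeal] at hstep
        exact lt_of_le_of_ne (Ideal.comap_mono hstep.le)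
          (fun he => hstep.ne (Ideal.comap_injective_of_surjective _
            Ideal.Quotient.mk_surjective he))
      refine (PrimeSpectrum.asIdeal_lt_asIdeal ⟨_, hpr i.castSucc⟩ ⟨_, hpr i.succ⟩).1 ?_
      show (((p i.castSucc).asIdeal).comap (Ideal.Quotient.mk I)).map (Ideal.Quotient.mk s) <
        (((p i.succ).asIdeal).comap (Ideal.Quotient.mk I)).map (Ideal.Quotient.mk s)
      refine lt_of_le_of_ne (Ideal.map_mono hlt.le) (fun he => hlt.ne ?_)
      have hk : Ideal.comap (Ideal.Quotient.mk s) ⊥ = s := by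
        rw [← RingHom.ker_eq_comap_bot, Ideal.mk_ker]
      have h1 := Ideal.comap_map_of_surjective (Ideal.Quotient.mk s)
        Ideal.Quotient.mk_surjective (((p i.castSucc).asIdeal).comap (Ideal.Quotient.mk I))
      have h2 := Ideal.comap_map_of_surjective (Ideal.Quotient.mk s)
        Ideal.Quotient.mk_surjective (((p i.succ).asIdeal).comap (Ideal.Quotient.mk I))
      rw [he, h2, hk, sup_eq_left.2 (hmem _), sup_eq_left.2 (hmem _)] at h1
      exact h1.symm⟩
  exact Order.LTSeries.length_le_krullDim q

lemma ringKrullDim_lt_of_cover {I : Ideal R} {c : WithBot ℕ∞} (hc : ⊥ < c)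
    {ι : Type*} (T : Finset ι) (f : ι → Ideal R)
    (hdim : ∀ s ∈ T, ringKrullDim (R ⧸ f s) < c)
    (hcover : ∀ P : Ideal R, P.IsPrime → I ≤ P → ∃ s ∈ T, f s ≤ P) :
    ringKrullDim (R ⧸ I) < c := by
  have hb : (T.sup fun s => ringKrullDim (R ⧸ f s)) < c := (Finset.sup_lt_iff hc).2 hdim
  refine lt_of_le_of_lt ?_ hb
  show Order.krullDim (PrimeSpectrum (R ⧸ I)) ≤ _
  rw [Order.krullDim]
  apply iSup_le
  intro p
  set P0 : Ideal R := (p.head.asIdeal).comap (Ideal.Quotient.mk I) with hP0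
  haveI : P0.IsPrime := Ideal.IsPrime.comap _
  have hIP : I ≤ P0 := by
    intro r hr
    show Ideal.Quotient.mk I r ∈ p.head.asIdeal
    rw [Ideal.Quotient.eq_zero_iff_mem.2 hr]
    exact (p.head.asIdeal).zero_mem
  obtain ⟨s, hsT, hsP⟩ := hcover P0 inferInstance hIP
  exact (length_le_dimQuot p hsP).trans (Finset.le_sup (f := fun s => ringKrullDim (R ⧸ f s)) hsT)

end Dim


open IsLocalRing

section ModDim

variable {R : Type*} [CommRing R] {M : Type*} [AddCommGroup M] [Module R M]

lemma moduleDim_of_subsingleton (X : Type*) [AddCommGroup X] [Module R X] [Subsingleton X] :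
    moduleDim R X = ⊥ := by
  have h : Module.annihilator R X = ⊤ := by
    rw [eq_top_iff]
    intro r _
    rw [Module.mem_annihilator]
    intro m
    exact Subsingleton.elim _ _
  unfold moduleDim
  haveI : Subsingleton (R ⧸ Module.annihilator R X) := by
    rw [Ideal.Quotient.subsingleton_iff]
    exact h
  exact ringKrullDim_eq_bot_of_subsingleton

lemma dimQuot_le_moduleDim {X : Type*} [AddCommGroup X] [Module R X] {q : Ideal R}
    (hq : q ∈ associatedPrimes R X) : ringKrullDim (R ⧸ q) ≤ moduleDim R X := by
  refine dimQuot_mono ?_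
  rw [← Submodule.annihilator_top]
  exact hq.annihilator_le

end ModDim

/-- If `0 = ⋂_{𝔭 ∈ Ass M} N(𝔭)` is a reduced primary decomposition of `0` in `M`, then
the dimension filtration is given by `D_i = ⋂_{dim R/𝔭 ≥ d_{i+1}} N(𝔭)`. -/
theorem stmt_15 {R : Type*} [CommRing R] [IsLocalRing R] [IsNoetherianRing R]
    {M : Type*} [AddCommGroup M] [Module R M] [Module.Finite R M]
    {t : ℕ} (D : Fin (t + 1) → Submodule R M) (hD : IsDimFiltration R M D)
    (ds : Fin (t + 1) → ℕ)
    (hds : ∀ i, (D i = ⊥ ∧ ds i = 0) ∨ moduleDim R ↥(D i) = (ds i : WithBot ℕ∞))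
    (N : {p : Ideal R // p ∈ associatedPrimes R M} → Submodule R M)
    (hprimary : ∀ p, associatedPrimes R (M ⧸ N p) = {p.val})
    (hdecomp : (⨅ p, N p) = ⊥)
    (hreduced : ∀ p, (⨅ q, ⨅ _ : q ≠ p, N q) ≠ ⊥) :
    ∀ i : Fin t, D i.castSucc =
      ⨅ p, ⨅ _ : (ds i.succ : WithBot ℕ∞) ≤ ringKrullDim (R ⧸ p.val), N p := by
  classical
  intro i
  set d : ℕ := ds i.succ with hd
  -- the dimension of `D i.succ` is `d`
  have hDsucc_dim : moduleDim R ↥(D i.succ) = (d : WithBot ℕ∞) := by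
    rcases hds i.succ with ⟨hbot, _⟩ | h
    · exfalso
      have hlt := (hD.2.2 i).2.1
      rw [hbot] at hlt
      rw [moduleDim_of_subsingleton ↥(⊥ : Submodule R M)] at hlt
      exact not_lt_bot hlt
    · exact h
  have hDlt : moduleDim R ↥(D i.castSucc) < (d : WithBot ℕ∞) := hDsucc_dim ▸ (hD.2.2 i).2.1
  -- Step A : `D i.castSucc ≤ N p` for every big prime `p`
  have stepA : ∀ p : {p : Ideal R // p ∈ associatedPrimes R M},
      (d : WithBot ℕ∞) ≤ ringKrullDim (R ⧸ p.val) → D i.castSucc ≤ N p := by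
    intro p hp
    by_contra hno
    obtain ⟨x, hxD, hxN⟩ := SetLike.not_le_iff_exists.1 hno
    set D' := D i.castSucc with hD'
    let f : ↥D' →ₗ[R] M ⧸ N p := ((N p).mkQ).comp D'.subtype
    have h1 : Module.annihilator R ↥D' ≤ Module.annihilator R (↥D' ⧸ LinearMap.ker f) :=
      (LinearMap.ker f).mkQ.annihilator_le_of_surjective (Submodule.mkQ_surjective _)
    have hfx : f ⟨x, hxD⟩ ≠ 0 := by
      simp only [f, LinearMap.comp_apply, Submodule.subtype_apply, Submodule.mkQ_apply]
      rw [Ne, Submodule.Quotient.mk_eq_zero]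
      exact hxN
    haveI : Nontrivial (↥D' ⧸ LinearMap.ker f) := by
      refine ⟨Submodule.Quotient.mk ⟨x, hxD⟩, 0, ?_⟩
      rw [Ne, Submodule.Quotient.mk_eq_zero, LinearMap.mem_ker]
      exact hfx
    obtain ⟨q, hq⟩ := associatedPrimes.nonempty R (↥D' ⧸ LinearMap.ker f)
    have hqm : q ∈ associatedPrimes R (M ⧸ N p) := by
      have e : (↥D' ⧸ LinearMap.ker f) ≃ₗ[R] LinearMap.range f := f.quotKerEquivRange
      exact (e.isAssociatedPrime_iff.1 hq).map_of_injective (LinearMap.range f).subtype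
        (Submodule.injective_subtype _)
    rw [hprimary p, Set.mem_singleton_iff] at hqm
    have h2 : Module.annihilator R (↥D' ⧸ LinearMap.ker f) ≤ q := by
      rw [← Submodule.annihilator_top]
      exact hq.annihilator_le
    have h3 : ringKrullDim (R ⧸ p.val) ≤ moduleDim R ↥D' := by
      rw [← hqm]
      exact dimQuot_mono (h1.trans h2)
    exact absurd (lt_of_le_of_lt (hp.trans h3) hDlt) (lt_irrefl _)
  set E : Submodule R M :=
    ⨅ p, ⨅ _ : (d : WithBot ℕ∞) ≤ ringKrullDim (R ⧸ p.val), N p with hE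
  have hB0 : D i.castSucc ≤ E := le_iInf fun p => le_iInf fun hp => stepA p hp
  -- finiteness of the set of associated primes, from irredundancy
  have hwit : ∀ p : {p : Ideal R // p ∈ associatedPrimes R M},
      ∃ x : M, x ∈ (⨅ q, ⨅ _ : q ≠ p, N q) ∧ x ≠ 0 := by
    intro p
    rcases (Submodule.ne_bot_iff _).1 (hreduced p) with ⟨x, hx, hx0⟩
    exact ⟨x, hx, hx0⟩
  choose w hw1 hw2 using hwit
  obtain ⟨W, ⟨s₀, hWs⟩, hmaxW⟩ := set_has_maximal_iff_noetherian.mpr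
    (inferInstance : IsNoetherian R M)
    {W : Submodule R M | ∃ s : Finset {p : Ideal R // p ∈ associatedPrimes R M},
      W = Submodule.span R (w '' ↑s)} ⟨_, ∅, rfl⟩
  have hall : ∀ p : {p : Ideal R // p ∈ associatedPrimes R M}, p ∈ s₀ := by
    intro p
    by_contra hp
    have hxmem : w p ∈ Submodule.span R (w '' ↑s₀) := by
      have hle : Submodule.span R (w '' ↑s₀) ≤ Submodule.span R (w '' ↑(insert p s₀)) :=
        Submodule.span_mono (Set.image_mono (by simp [Finset.coe_insert, Set.subset_insert]))
      have hnotlt := hmaxW _ ⟨insert p s₀, rfl⟩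
      rw [hWs] at hnotlt
      have heq := hle.lt_or_eq.resolve_left hnotlt
      rw [heq]
      exact Submodule.subset_span ⟨p, by simp, rfl⟩
    have hspan_le : Submodule.span R (w '' ↑s₀) ≤ N p := by
      rw [Submodule.span_le]
      rintro _ ⟨q, hq, rfl⟩
      have hqp : q ≠ p := fun h => hp (h ▸ hq)
      exact (Submodule.mem_iInf _).1 ((Submodule.mem_iInf _).1 (hw1 q) p) hqp.symm
    have hbot : w p ∈ (⨅ q, N q) := by
      rw [Submodule.mem_iInf]
      intro q
      by_cases h : q = p
      · exact h ▸ hspan_le hxmem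
      · exact (Submodule.mem_iInf _).1 ((Submodule.mem_iInf _).1 (hw1 p) q) h
    rw [hdecomp] at hbot
    exact hw2 p hbot
  -- the small primes, with powers annihilating the corresponding primary quotients
  set smalls : Finset {p : Ideal R // p ∈ associatedPrimes R M} :=
    s₀.filter (fun p => ¬ (d : WithBot ℕ∞) ≤ ringKrullDim (R ⧸ p.val)) with hsmalls
  have hrad : ∀ p : {p : Ideal R // p ∈ associatedPrimes R M},
      (Module.annihilator R (M ⧸ N p)).radical = p.val := by
    intro p
    rw [Ideal.radical_eq_sInf]
    apply le_antisymm
    · apply sInf_le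
      have hmem : p.val ∈ associatedPrimes R (M ⧸ N p) := by
        rw [hprimary p]; rfl
      refine ⟨?_, hmem.isPrime⟩
      rw [← Submodule.annihilator_top]
      exact hmem.annihilator_le
    · apply le_sInf
      rintro J ⟨hJ1, hJ2⟩
      obtain ⟨Q, hQ, hQJ⟩ := exists_assocPrime_le hJ2 hJ1
      rw [hprimary p, Set.mem_singleton_iff] at hQ
      exact hQ ▸ hQJ
  have hpow : ∀ p : {p : Ideal R // p ∈ associatedPrimes R M},
      ∃ n : ℕ, (p.val) ^ (n + 1) ≤ Module.annihilator R (M ⧸ N p) := by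
    intro p
    obtain ⟨n, hn⟩ := Ideal.exists_pow_le_of_le_radical_of_fg_radical
      (le_of_eq (hrad p).symm) (IsNoetherian.noetherian _)
    exact ⟨n, le_trans (Ideal.pow_le_pow_right (Nat.le_succ n)) hn⟩
  choose np hnp using hpow
  set J : Ideal R := ∏ p ∈ smalls, (p.val) ^ (np p + 1) with hJ
  have hJann : J ≤ Module.annihilator R ↥E := by
    intro r hr
    rw [Module.mem_annihilator]
    intro x
    have hx : (x : M) ∈ E := x.2
    have key : r • (x : M) ∈ (⨅ q, N q) := by
      rw [Submodule.mem_iInf]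
      intro q
      by_cases hq : (d : WithBot ℕ∞) ≤ ringKrullDim (R ⧸ q.val)
      · have hxq : (x : M) ∈ N q :=
          (Submodule.mem_iInf _).1 ((Submodule.mem_iInf _).1 hx q) hq
        exact Submodule.smul_mem _ r hxq
      · have hqs : q ∈ smalls := Finset.mem_filter.2 ⟨hall q, hq⟩
        have h5 : J ≤ (q.val) ^ (np q + 1) :=
          le_trans Ideal.prod_le_inf (Finset.inf_le hqs)
        have hrq : r ∈ Module.annihilator R (M ⧸ N q) := (h5.trans (hnp q)) hr
        rw [Module.mem_annihilator] at hrq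
        have := hrq (Submodule.Quotient.mk (x : M))
        rwa [← Submodule.Quotient.mk_smul, Submodule.Quotient.mk_eq_zero] at this
    rw [hdecomp] at key
    exact Subtype.ext (by simpa using key)
  have hEdim : moduleDim R ↥E < (d : WithBot ℕ∞) := by
    show ringKrullDim (R ⧸ Module.annihilator R ↥E) < (d : WithBot ℕ∞)
    refine ringKrullDim_lt_of_cover (WithBot.bot_lt_coe _) smalls (fun p => p.val) ?_ ?_
    · intro p hp
      exact not_le.1 (Finset.mem_filter.1 hp).2
    · intro P hP hle
      have hJP : J ≤ P := hJann.trans hle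
      obtain ⟨p, hps, hpP⟩ := hP.prod_le.1 hJP
      exact ⟨p, hps, (Ideal.IsPrime.pow_le_iff (Nat.succ_ne_zero _)).1 hpP⟩
  -- monotonicity of dimensions along the filtration
  have hmono : ∀ b : Fin (t + 1), ∀ a : Fin (t + 1), a ≤ b →
      moduleDim R ↥(D a) ≤ moduleDim R ↥(D b) := by
    intro b
    induction b using Fin.induction with
    | zero => intro a ha; rw [Fin.le_zero_iff.1 ha]
    | succ j ih =>
      intro a ha
      rcases lt_or_eq_of_le ha with hlt | heq
      · exact (ih a (Fin.le_castSucc_iff.2 hlt)).trans (le_of_lt (hD.2.2 j).2.1)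
      · rw [heq]
  -- reverse induction : `E ≤ D j` for all `j ≥ i`
  have hEleD : ∀ j : Fin (t + 1), i.castSucc ≤ j → E ≤ D j := by
    intro j
    induction j using Fin.reverseInduction with
    | last => intro _; rw [hD.2.1]; exact le_top
    | cast j ih =>
      intro hij
      have hij' : i ≤ j := Fin.castSucc_le_castSucc_iff.1 hij
      have h1 : E ≤ D j.succ := ih (le_of_lt (lt_of_le_of_lt hij (Fin.castSucc_lt_succ (i := j))))
      refine (hD.2.2 j).2.2 E h1 ?_
      refine lt_of_lt_of_le hEdim ?_
      rw [← hDsucc_dim]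
      exact hmono j.succ i.succ (Fin.succ_le_succ_iff.2 hij')
  exact le_antisymm hB0 (hEleD i.castSucc le_rfl)
end

section
/- Let (R, 𝔪) be a commutative Noetherian local ring, M a finitely generated R-module of dimension d with dimension filtration D_0 ⊂ D_1 ⊂ ⋯ ⊂ D_t = M and d_i = dim D_i, and let x_1, …, x_d be a good system of parameters of M. Then (a) for each i = 1, …, t, the truncation x_1, …, x_{d_i} is a good system of parameters of D_i; and (b) for any d-tuple of positive integers n_1, …, n_d, the sequence x_1^{n_1}, …, x_d^{n_d} is again a good system of parameters of M. -/
open IsLocalRing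

set_option linter.unusedSectionVars false


section Aux

universe u v

variable {R : Type u} [CommRing R]

lemma aux_isArtinian_of_isTorsionBySet {I : Ideal R} {M : Type v} [AddCommGroup M] [Module R M]
    (hM : Module.IsTorsionBySet R M (I : Set R))
    (h : letI := hM.module; IsArtinian (R ⧸ I) M) : IsArtinian R M := by
  letI := hM.module
  haveI : IsScalarTower R (R ⧸ I) M := hM.isScalarTower
  let g : Submodule R M → Submodule (R ⧸ I) M := fun p =>
    { carrier := (p : Set M)
      add_mem' := fun h1 h2 => p.add_mem h1 h2
      zero_mem' := p.zero_mem
      smul_mem' := by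
        intro c x hx
        obtain ⟨r, rfl⟩ := Ideal.Quotient.mk_surjective c
        have hrx : (Ideal.Quotient.mk I r) • x = r • x := Module.IsTorsionBySet.mk_smul hM r x
        simpa [hrx] using p.smul_mem r hx }
  let e : Submodule R M ↪o Submodule (R ⧸ I) M :=
    { toFun := g
      inj' := fun p q hpq =>
        SetLike.coe_injective (congrArg (fun s : Submodule (R ⧸ I) M => (s : Set M)) hpq)
      map_rel_iff' := ⟨fun h x hx => h hx, fun h x hx => h hx⟩ }
  haveI := h
  exact e.wellFoundedLT

lemma aux_isArtinian_of_max_torsion [IsLocalRing R] {M : Type v} [AddCommGroup M] [Module R M]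
    [Module.Finite R M] (h : ∀ a ∈ maximalIdeal R, ∀ x : M, a • x = 0) :
    IsArtinian R M := by
  have hM : Module.IsTorsionBySet R M ((maximalIdeal R : Ideal R) : Set R) :=
    fun x a => h a a.2 x
  apply aux_isArtinian_of_isTorsionBySet hM
  letI := hM.module
  haveI : IsScalarTower R (R ⧸ maximalIdeal R) M := hM.isScalarTower
  letI : Field (R ⧸ maximalIdeal R) := Ideal.Quotient.field _
  haveI : Module.Finite (R ⧸ maximalIdeal R) M :=
    Module.Finite.of_restrictScalars_finite R (R ⧸ maximalIdeal R) M
  exact isArtinian_of_fg_of_artinian'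

lemma aux_pow_succ_smul (I : Ideal R) (k : ℕ) {M : Type v} [AddCommGroup M] [Module R M]
    (N : Submodule R M) : I ^ (k + 1) • N = I • (I ^ k • N) := by
  rw [pow_succ', ← Ideal.smul_eq_mul, Submodule.smul_assoc]

variable [IsLocalRing R] [IsNoetherianRing R]

lemma aux_isArtinian_of_pow_smul :
    ∀ (k : ℕ) {M : Type v} [AddCommGroup M] [Module R M] [Module.Finite R M],
      (maximalIdeal R) ^ k • (⊤ : Submodule R M) = ⊥ → IsArtinian R M := by
  intro k
  induction k with
  | zero =>
    intro M _ _ _ h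
    rw [pow_zero, Ideal.one_eq_top, Submodule.top_smul] at h
    haveI : Subsingleton M := by
      refine subsingleton_of_forall_eq 0 fun m => ?_
      have hm : m ∈ (⊤ : Submodule R M) := Submodule.mem_top
      rw [h] at hm
      simpa using hm
    infer_instance
  | succ k ih =>
    intro M _ _ _ h
    set N : Submodule R M := (maximalIdeal R) ^ k • ⊤ with hN
    have hmN : maximalIdeal R • N = ⊥ := by
      rw [hN, ← aux_pow_succ_smul, h]
    haveI : Module.Finite R ↥N := Module.Finite.iff_fg.mpr (IsNoetherian.noetherian N)
    have hart1 : IsArtinian R ↥N := by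
      apply aux_isArtinian_of_max_torsion
      intro a ha x
      have hx : a • (x : M) ∈ maximalIdeal R • N := Submodule.smul_mem_smul ha x.2
      rw [hmN, Submodule.mem_bot] at hx
      exact Subtype.ext hx
    haveI : Module.Finite R (M ⧸ N) :=
      Module.Finite.of_surjective N.mkQ (Submodule.Quotient.mk_surjective N)
    have hart2 : IsArtinian R (M ⧸ N) := by
      apply ih (M := M ⧸ N)
      have h1 : Submodule.map N.mkQ ((maximalIdeal R) ^ k • (⊤ : Submodule R M))
          = (maximalIdeal R) ^ k • (⊤ : Submodule R (M ⧸ N)) := by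
        rw [Submodule.map_smul'', Submodule.map_top, Submodule.range_mkQ]
      rw [← h1, ← hN, Submodule.mkQ_map_self]
    exact (isArtinian_iff_submodule_quotient N).mpr ⟨hart1, hart2⟩

lemma aux_fl_iff_pow {M : Type v} [AddCommGroup M] [Module R M] [Module.Finite R M] :
    IsFiniteLength R M ↔ ∃ k, (maximalIdeal R) ^ k • (⊤ : Submodule R M) = ⊥ := by
  constructor
  · intro hfl
    haveI := (isFiniteLength_iff_isNoetherian_isArtinian.mp hfl).2
    obtain ⟨n, hn⟩ := IsArtinian.monotone_stabilizes (R := R) (M := M)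
      ⟨fun n => OrderDual.toDual ((maximalIdeal R) ^ n • ⊤),
       fun a b hab => Submodule.smul_mono_left (Ideal.pow_le_pow_right hab)⟩
    have heq : (maximalIdeal R) ^ n • (⊤ : Submodule R M)
        = (maximalIdeal R) ^ (n + 1) • ⊤ := congrArg OrderDual.ofDual (hn (n + 1) (by omega))
    refine ⟨n, Submodule.eq_bot_of_le_smul_of_le_jacobson_bot (maximalIdeal R) _
      (IsNoetherian.noetherian _) ?_ ?_⟩
    · exact le_of_eq (heq.trans (aux_pow_succ_smul _ _ _))
    · exact IsLocalRing.maximalIdeal_le_jacobson ⊥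
  · rintro ⟨k, hk⟩
    exact isFiniteLength_iff_isNoetherian_isArtinian.mpr
      ⟨inferInstance, aux_isArtinian_of_pow_smul k hk⟩

lemma aux_fl_quot_iff {M : Type v} [AddCommGroup M] [Module R M] [Module.Finite R M]
    (N : Submodule R M) :
    IsFiniteLength R (M ⧸ N) ↔ ∃ k, (maximalIdeal R) ^ k • (⊤ : Submodule R M) ≤ N := by
  haveI : Module.Finite R (M ⧸ N) :=
    Module.Finite.of_surjective N.mkQ (Submodule.Quotient.mk_surjective N)
  rw [aux_fl_iff_pow]
  refine exists_congr fun k => ?_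
  constructor
  · intro h
    have h1 : Submodule.map N.mkQ ((maximalIdeal R) ^ k • (⊤ : Submodule R M)) = ⊥ := by
      rw [Submodule.map_smul'', Submodule.map_top, Submodule.range_mkQ, h]
    rwa [← le_bot_iff, Submodule.map_le_iff_le_comap, Submodule.comap_bot,
      Submodule.ker_mkQ] at h1
  · intro h
    have h1 : Submodule.map N.mkQ ((maximalIdeal R) ^ k • (⊤ : Submodule R M)) = ⊥ := by
      rw [← le_bot_iff, Submodule.map_le_iff_le_comap, Submodule.comap_bot, Submodule.ker_mkQ]
      exact h
    rwa [Submodule.map_smul'', Submodule.map_top, Submodule.range_mkQ] at h1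

lemma aux_pow_chain {M : Type v} [AddCommGroup M] [Module R M] {I : Ideal R} {k : ℕ}
    (h : (maximalIdeal R) ^ k • (⊤ : Submodule R M) ≤ I • ⊤) :
    ∀ n : ℕ, (maximalIdeal R) ^ (k * n) • (⊤ : Submodule R M) ≤ I ^ n • ⊤ := by
  intro n
  induction n with
  | zero => simp [Ideal.one_eq_top, Submodule.top_smul]
  | succ n ih =>
    have h2 : (maximalIdeal R) ^ (k * (n + 1)) • (⊤ : Submodule R M)
        = (maximalIdeal R) ^ (k * n) • ((maximalIdeal R) ^ k • ⊤) := by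
      rw [← Submodule.smul_assoc, Ideal.smul_eq_mul, ← pow_add, mul_add, mul_one]
    rw [h2]
    calc (maximalIdeal R) ^ (k * n) • ((maximalIdeal R) ^ k • (⊤ : Submodule R M))
        ≤ (maximalIdeal R) ^ (k * n) • (I • ⊤) := smul_mono_right _ h
      _ = I • ((maximalIdeal R) ^ (k * n) • ⊤) := by
          rw [← Submodule.smul_assoc, ← Submodule.smul_assoc, Ideal.smul_eq_mul,
            Ideal.smul_eq_mul, mul_comm]
      _ ≤ I • (I ^ n • ⊤) := smul_mono_right _ ih
      _ = I ^ (n + 1) • ⊤ := (aux_pow_succ_smul I n ⊤).symm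

end Aux

section Aux2

universe u v

lemma aux_det_trick {R : Type u} [CommRing R] {M : Type v} [AddCommGroup M] [Module R M]
    [Module.Finite R M] (a : R) (I : Ideal R)
    (h : ∀ m : M, a • m ∈ I • (⊤ : Submodule R M)) :
    ∃ n : ℕ, a ^ n ∈ I ⊔ Module.annihilator R M := by
  obtain ⟨p, hmonic, -, hcoeff, heval⟩ :=
    LinearMap.exists_monic_and_coeff_mem_pow_and_aeval_eq_zero_of_range_le_smul R
      (a • (LinearMap.id : M →ₗ[R] M)) I (by rintro y ⟨m, rfl⟩; exact h m)
  refine ⟨p.natDegree, ?_⟩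
  have hfeq : (a • (LinearMap.id : M →ₗ[R] M)) = algebraMap R (Module.End R M) a := by
    ext m
    simp [Module.algebraMap_end_apply]
  rw [hfeq, Polynomial.aeval_algebraMap_apply_eq_algebraMap_eval] at heval
  have hpa : p.eval a ∈ Module.annihilator R M := by
    rw [Module.mem_annihilator]
    intro m
    have h0 : (algebraMap R (Module.End R M) (p.eval a)) m = 0 := by
      rw [heval]
      rfl
    simpa [Module.algebraMap_end_apply] using h0
  have hterm : (∑ k ∈ Finset.range p.natDegree, p.coeff k * a ^ k) ∈ I := by
    refine Ideal.sum_mem _ fun k hk => Ideal.mul_mem_right _ _ ?_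
    have hkn : k < p.natDegree := Finset.mem_range.mp hk
    exact Ideal.pow_le_self (by omega) (hcoeff k)
  have hsum : a ^ p.natDegree
      = p.eval a - ∑ k ∈ Finset.range p.natDegree, p.coeff k * a ^ k := by
    rw [Polynomial.eval_eq_sum_range, Finset.sum_range_succ, hmonic.coeff_natDegree, one_mul]
    ring
  rw [hsum]
  exact Submodule.sub_mem _ (Submodule.mem_sup_right hpa) (Submodule.mem_sup_left hterm)

lemma aux_prime_bound {R : Type u} [CommRing R] [IsLocalRing R] {M : Type v} [AddCommGroup M]
    [Module R M] [Module.Finite R M] {q : Ideal R} {k : ℕ}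
    (hk : (maximalIdeal R) ^ k • (⊤ : Submodule R M) ≤ q • ⊤)
    {P : Ideal R} (hP : P.IsPrime) (hqP : q ≤ P) (hannP : Module.annihilator R M ≤ P) :
    maximalIdeal R ≤ P := by
  intro a ha
  have h1 : ∀ m : M, (a ^ k) • m ∈ q • (⊤ : Submodule R M) := fun m =>
    hk (Submodule.smul_mem_smul (Ideal.pow_mem_pow ha k) Submodule.mem_top)
  obtain ⟨n, hn⟩ := aux_det_trick (a ^ k) q h1
  rw [← pow_mul] at hn
  exact hP.mem_of_pow_mem _ ((sup_le hqP hannP) hn)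

lemma aux_le_annihilator_quotient {R : Type u} [CommRing R] {M : Type v} [AddCommGroup M]
    [Module R M] (I : Ideal R) :
    I ⊔ Module.annihilator R M
      ≤ Module.annihilator R (M ⧸ (I • ⊤ : Submodule R M)) := by
  refine sup_le ?_ ?_ <;> intro r hr <;> rw [Module.mem_annihilator] <;> intro w <;>
    obtain ⟨v, rfl⟩ := Submodule.Quotient.mk_surjective _ w
  · rw [← Submodule.Quotient.mk_smul, Submodule.Quotient.mk_eq_zero]
    exact Submodule.smul_mem_smul hr Submodule.mem_top
  · rw [← Submodule.Quotient.mk_smul, Module.mem_annihilator.mp hr v]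
    rfl

lemma aux_smul_top_eq_bot {R : Type u} [CommRing R] {M : Type v} [AddCommGroup M]
    [Module R M] {I : Ideal R} (h : I ≤ Module.annihilator R M) :
    I • (⊤ : Submodule R M) = ⊥ := by
  rw [eq_bot_iff]
  refine Submodule.smul_le.mpr fun r hr m _ => ?_
  simpa using Module.mem_annihilator.mp (h hr) m

lemma aux_ann_le_submodule {R : Type u} [CommRing R] {M : Type v} [AddCommGroup M]
    [Module R M] (N : Submodule R M) :
    Module.annihilator R M ≤ Module.annihilator R ↥N := by
  intro r hr
  rw [Module.mem_annihilator] at hr ⊢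
  intro m
  exact Subtype.ext (by simpa using hr (m : M))

lemma aux_smul_eq_bot_le_ann {R : Type u} [CommRing R] {M : Type v} [AddCommGroup M]
    [Module R M] {I : Ideal R} {N : Submodule R M} (h : I • N = ⊥) :
    I ≤ Module.annihilator R ↥N := by
  intro r hr
  rw [Module.mem_annihilator]
  intro m
  have hm : r • (m : M) ∈ I • N := Submodule.smul_mem_smul hr m.2
  rw [h, Submodule.mem_bot] at hm
  exact Subtype.ext (by simpa using hm)

end Aux2

/-- If `x₁,…,x_d` is a good system of parameters of `M`, then (a) each truncation
`x₁,…,x_{d_i}` is a good system of parameters of `D_i` (whose dimension filtration is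
the truncation of that of `M`), and (b) `x₁^{n₁},…,x_d^{n_d}` is again a good system of
parameters of `M` for all positive `n₁,…,n_d`. -/
theorem stmt_16 {R : Type*} [CommRing R] [IsLocalRing R] [IsNoetherianRing R]
    {M : Type*} [AddCommGroup M] [Module R M] [Module.Finite R M]
    {d t : ℕ} (hd : moduleDim R M = (d : WithBot ℕ∞))
    (D : Fin (t + 1) → Submodule R M) (hD : IsDimFiltration R M D)
    (ds : Fin (t + 1) → ℕ)
    (hds : ∀ i, (D i = ⊥ ∧ ds i = 0) ∨ moduleDim R ↥(D i) = (ds i : WithBot ℕ∞))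
    (hdsd : ∀ i, ds i ≤ d)
    (x : Fin d → R) (hx : IsGoodSOP R M D ds x) :
    (∀ i : Fin (t + 1), 1 ≤ (i : ℕ) →
        IsGoodSOP R ↥(D i)
          (fun k : Fin ((i : ℕ) + 1) => (D (Fin.castLE i.isLt k)).comap (D i).subtype)
          (fun k : Fin ((i : ℕ) + 1) => ds (Fin.castLE i.isLt k))
          (fun j : Fin (ds i) => x (Fin.castLE (hdsd i) j))) ∧
      ∀ nn : Fin d → ℕ, (∀ j, 1 ≤ nn j) →
        IsGoodSOP R M D ds (fun j => x j ^ nn j) := by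
  classical
  obtain ⟨⟨hxm, hxfl⟩, hgood⟩ := hx
  set q : Ideal R := Ideal.span (Set.range x) with hq
  obtain ⟨k, hk⟩ : ∃ k, (maximalIdeal R) ^ k • (⊤ : Submodule R M) ≤ q • ⊤ :=
    (aux_fl_quot_iff (q • ⊤)).mp hxfl
  -- annihilator of the top submodule
  have htop_ann : Module.annihilator R ↥(⊤ : Submodule R M) = Module.annihilator R M := by
    ext r
    simp only [Module.mem_annihilator]
    constructor
    · intro h m
      simpa using congrArg Subtype.val (h ⟨m, Submodule.mem_top⟩)
    · intro h m
      exact Subtype.ext (by simpa using h (m : M))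
  -- ds (last) = d
  have hdst : ds (Fin.last t) = d := by
    rcases hds (Fin.last t) with ⟨hbot, -⟩ | hdim
    · exfalso
      rw [hD.2.1] at hbot
      haveI : Subsingleton M := by
        refine subsingleton_of_forall_eq 0 fun m => ?_
        have hm : m ∈ (⊤ : Submodule R M) := Submodule.mem_top
        rw [hbot] at hm
        simpa using hm
      haveI : Subsingleton (R ⧸ Module.annihilator R M) := by
        have hann : Module.annihilator R M = ⊤ := by
          rw [eq_top_iff]
          intro r _
          rw [Module.mem_annihilator]
          intro m
          exact Subsingleton.elim _ _
        rw [hann]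
        exact Submodule.Quotient.subsingleton_iff.mpr rfl
      have hbotdim : moduleDim R M = ⊥ := ringKrullDim_eq_bot_of_subsingleton
      rw [hbotdim] at hd
      simp at hd
    · rw [hD.2.1] at hdim
      have h2 : moduleDim R ↥(⊤ : Submodule R M) = moduleDim R M := by
        unfold moduleDim
        rw [htop_ann]
      rw [h2, hd] at hdim
      exact_mod_cast hdim.symm
  -- the "tail" ideals kill D i
  have hQsplit : ∀ i : Fin (t + 1),
      Ideal.span {r : R | ∃ j : Fin d, (ds i) ≤ (j : ℕ) ∧ r = x j} • (D i) = ⊥ := by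
    intro i
    by_cases hit : (i : ℕ) < t
    · have hg := hgood i hit
      have hle : Ideal.span {r : R | ∃ j : Fin d, (ds i) ≤ (j : ℕ) ∧ r = x j} • (D i)
          ≤ D i ⊓ Ideal.span {r : R | ∃ j : Fin d, (ds i) ≤ (j : ℕ) ∧ r = x j} • ⊤ :=
        le_inf Submodule.smul_le_right (smul_mono_right _ le_top)
      exact le_bot_iff.mp (hle.trans (le_of_eq hg))
    · have hieq : i = Fin.last t := by
        apply Fin.ext
        have := i.isLt
        simp only [Fin.val_last]
        omega
      subst hieq
      have hempty : {r : R | ∃ j : Fin d, (ds (Fin.last t)) ≤ (j : ℕ) ∧ r = x j} = ∅ := by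
        ext r
        simp only [Set.mem_setOf_eq, Set.mem_empty_iff_false, iff_false, not_exists, not_and]
        intro j hj
        rw [hdst] at hj
        exact absurd j.isLt (by omega)
      rw [hempty, Ideal.span_empty, Submodule.bot_smul]
  -- q splits as head ⊔ tail
  have hqsup : ∀ i : Fin (t + 1), q =
      Ideal.span {r : R | ∃ j : Fin d, (j : ℕ) < ds i ∧ r = x j} ⊔
        Ideal.span {r : R | ∃ j : Fin d, (ds i) ≤ (j : ℕ) ∧ r = x j} := by
    intro i
    rw [hq, ← Ideal.span_union]
    congr 1
    ext r
    simp only [Set.mem_range, Set.mem_union, Set.mem_setOf_eq]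
    constructor
    · rintro ⟨j, rfl⟩
      by_cases hj : (j : ℕ) < ds i
      · exact Or.inl ⟨j, hj, rfl⟩
      · exact Or.inr ⟨j, by omega, rfl⟩
    · rintro (⟨j, -, rfl⟩ | ⟨j, -, rfl⟩) <;> exact ⟨j, rfl⟩
  constructor
  · -- part (a)
    intro i _hi
    haveI : Module.Finite R ↥(D i) := Module.Finite.iff_fg.mpr (IsNoetherian.noetherian (D i))
    refine ⟨⟨fun j => hxm _, ?_⟩, ?_⟩
    · -- finite length
      have hJ : Ideal.span (Set.range fun j : Fin (ds i) => x (Fin.castLE (hdsd i) j)) =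
          Ideal.span {r : R | ∃ j : Fin d, (j : ℕ) < ds i ∧ r = x j} := by
        congr 1
        ext r
        simp only [Set.mem_range, Set.mem_setOf_eq]
        constructor
        · rintro ⟨j, rfl⟩
          exact ⟨Fin.castLE (hdsd i) j, j.isLt, rfl⟩
        · rintro ⟨j, hj, rfl⟩
          exact ⟨⟨(j : ℕ), hj⟩, rfl⟩
      set J : Ideal R := Ideal.span (Set.range fun j : Fin (ds i) => x (Fin.castLE (hdsd i) j))
        with hJdef
      haveI : Module.Finite R (↥(D i) ⧸ (J • ⊤ : Submodule R ↥(D i))) :=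
        Module.Finite.of_surjective (J • ⊤ : Submodule R ↥(D i)).mkQ
          (Submodule.Quotient.mk_surjective _)
      have hannW : q ⊔ Module.annihilator R M
          ≤ Module.annihilator R (↥(D i) ⧸ (J • ⊤ : Submodule R ↥(D i))) := by
        refine sup_le ?_ ?_
        · rw [hqsup i, ← hJ]
          refine sup_le ?_ ?_
          · exact le_sup_left.trans (aux_le_annihilator_quotient J)
          · exact le_trans (aux_smul_eq_bot_le_ann (hQsplit i))
              (le_sup_right.trans (aux_le_annihilator_quotient J))
        · exact (aux_ann_le_submodule (D i)).trans
            (le_sup_right.trans (aux_le_annihilator_quotient J))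
      have hrad : maximalIdeal R ≤
          (Module.annihilator R (↥(D i) ⧸ (J • ⊤ : Submodule R ↥(D i)))).radical := by
        rw [Ideal.radical_eq_sInf]
        refine le_sInf ?_
        rintro P ⟨hPann, hPprime⟩
        exact aux_prime_bound hk hPprime ((le_sup_left.trans hannW).trans hPann)
          ((le_sup_right.trans hannW).trans hPann)
      obtain ⟨K, hK⟩ := Ideal.exists_pow_le_of_le_radical_of_fg hrad
        (IsNoetherian.noetherian _)
      exact aux_fl_iff_pow.mpr ⟨K, aux_smul_top_eq_bot hK⟩
    · -- goodness of the truncation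
      intro k' hk'
      show Submodule.comap (D i).subtype (D (Fin.castLE i.isLt k')) ⊓
          Ideal.span {r : R | ∃ j : Fin (ds i),
            ds (Fin.castLE i.isLt k') ≤ (j : ℕ) ∧ r = x (Fin.castLE (hdsd i) j)} •
          (⊤ : Submodule R ↥(D i)) = ⊥
      set k0 : Fin (t + 1) := Fin.castLE i.isLt k' with hk0
      have hk0t : (k0 : ℕ) < t := by
        have h1 : (k0 : ℕ) = (k' : ℕ) := rfl
        have h2 := i.isLt
        omega
      apply Submodule.map_injective_of_injective (Submodule.injective_subtype (D i))
      rw [Submodule.map_bot]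
      apply le_bot_iff.mp
      have hstep1 : Submodule.map (D i).subtype
            (Submodule.comap (D i).subtype (D k0)) ≤ D k0 := Submodule.map_comap_le _ _
      have hstep2 : Submodule.map (D i).subtype
            (Ideal.span {r : R | ∃ j : Fin (ds i),
              ds k0 ≤ (j : ℕ) ∧ r = x (Fin.castLE (hdsd i) j)} • ⊤)
          ≤ Ideal.span {r : R | ∃ j : Fin d, ds k0 ≤ (j : ℕ) ∧ r = x j} • ⊤ := by
        rw [Submodule.map_smul'', Submodule.map_top, Submodule.range_subtype]
        refine Submodule.smul_mono ?_ le_top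
        rw [Ideal.span_le]
        rintro r ⟨j, hj, rfl⟩
        exact Ideal.subset_span ⟨Fin.castLE (hdsd i) j, hj, rfl⟩
      calc Submodule.map (D i).subtype (Submodule.comap (D i).subtype (D k0) ⊓
              Ideal.span {r : R | ∃ j : Fin (ds i),
                ds k0 ≤ (j : ℕ) ∧ r = x (Fin.castLE (hdsd i) j)} • ⊤)
          ≤ D k0 ⊓ Ideal.span {r : R | ∃ j : Fin d, ds k0 ≤ (j : ℕ) ∧ r = x j} • ⊤ :=
            le_inf ((Submodule.map_mono inf_le_left).trans hstep1)
              ((Submodule.map_mono inf_le_right).trans hstep2)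
        _ = ⊥ := hgood k0 hk0t
  · -- part (b)
    intro nn hnn
    refine ⟨⟨fun j => Ideal.pow_mem_of_mem _ (hxm j) _ (hnn j), ?_⟩, ?_⟩
    · have hrad : q ≤ (Ideal.span (Set.range fun j => x j ^ nn j)).radical := by
        rw [hq, Ideal.span_le]
        rintro r ⟨j, rfl⟩
        exact ⟨nn j, Ideal.subset_span ⟨j, rfl⟩⟩
      obtain ⟨N, hN⟩ := Ideal.exists_pow_le_of_le_radical_of_fg hrad
        (IsNoetherian.noetherian q)
      refine (aux_fl_quot_iff _).mpr ⟨k * N, ?_⟩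
      exact (aux_pow_chain hk N).trans (Submodule.smul_mono_left hN)
    · intro i hit
      show D i ⊓ Ideal.span {r : R | ∃ j : Fin d, ds i ≤ (j : ℕ) ∧ r = x j ^ nn j} •
          (⊤ : Submodule R M) = ⊥
      have hsub : Ideal.span {r : R | ∃ j : Fin d, ds i ≤ (j : ℕ) ∧ r = x j ^ nn j}
          ≤ Ideal.span {r : R | ∃ j : Fin d, ds i ≤ (j : ℕ) ∧ r = x j} := by
        rw [Ideal.span_le]
        rintro r ⟨j, hj, rfl⟩
        refine Ideal.pow_mem_of_mem _ ?_ _ (hnn j)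
        exact Ideal.subset_span ⟨j, hj, rfl⟩
      apply le_bot_iff.mp
      calc D i ⊓ Ideal.span {r : R | ∃ j : Fin d, ds i ≤ (j : ℕ) ∧ r = x j ^ nn j} • ⊤
          ≤ D i ⊓ Ideal.span {r : R | ∃ j : Fin d, ds i ≤ (j : ℕ) ∧ r = x j} • ⊤ :=
            inf_le_inf_left _ (Submodule.smul_mono_left hsub)
        _ = ⊥ := hgood i hit
end
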